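/- arXiv:1801.01740 — 6 statements merged into one kernel-verified Lean document; each statement's English description precedes it below -/
import Mathlib

section
/- For every probability measure μ on X, the log-partition function A(·, μ) is twice continuously differentiable on ℝ^L and its second derivative at λ is the covariance form of f under E(λ, μ): for all u, v ∈ ℝ^L, D²A(λ, μ)(u, v) = ∫_X ⟨u, f⟩⟨v, f⟩ dE(λ, μ) − (∫_X ⟨u, f⟩ dE(λ, μ))(∫_X ⟨v, f⟩ dE(λ, μ)). -/
open MeasureTheory
open scoped RealInnerProductSpace ENNReal NNReal

set_option maxHeartbeats 1000000
set_option synthInstance.maxHeartbeats 200000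

namespace LogPartAux

variable {X : Type*} [MeasurableSpace X] {L : ℕ}

noncomputable instance instCENormG₂ : ContinuousENorm (EuclideanSpace ℝ (Fin L) →L[ℝ] EuclideanSpace ℝ (Fin L) →L[ℝ] ℝ) :=
  @SeminormedAddGroup.toContinuousENorm (EuclideanSpace ℝ (Fin L) →L[ℝ] EuclideanSpace ℝ (Fin L) →L[ℝ] ℝ) inferInstance

noncomputable instance instCAddG₂ : ContinuousAdd (EuclideanSpace ℝ (Fin L) →L[ℝ] EuclideanSpace ℝ (Fin L) →L[ℝ] ℝ) :=
  @IsTopologicalAddGroup.toContinuousAdd _ _ _ ContinuousLinearMap.topologicalAddGroup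

noncomputable def Z (μ : Measure X) (f : X → EuclideanSpace ℝ (Fin L))
    (l : EuclideanSpace ℝ (Fin L)) : ℝ :=
  ∫ x, Real.exp ⟪l, f x⟫ ∂μ

noncomputable def G (f : X → EuclideanSpace ℝ (Fin L)) (l : EuclideanSpace ℝ (Fin L)) (x : X) :
    EuclideanSpace ℝ (Fin L) →L[ℝ] ℝ :=
  Real.exp ⟪l, f x⟫ • innerSL ℝ (f x)

noncomputable def G₂ (f : X → EuclideanSpace ℝ (Fin L)) (l : EuclideanSpace ℝ (Fin L)) (x : X) :
    EuclideanSpace ℝ (Fin L) →L[ℝ] EuclideanSpace ℝ (Fin L) →L[ℝ] ℝ :=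
  (G f l x).smulRight (innerSL ℝ (f x))

noncomputable def Z₁ (μ : Measure X) (f : X → EuclideanSpace ℝ (Fin L))
    (l : EuclideanSpace ℝ (Fin L)) : EuclideanSpace ℝ (Fin L) →L[ℝ] ℝ :=
  ∫ x, G f l x ∂μ

noncomputable def Z₂ (μ : Measure X) (f : X → EuclideanSpace ℝ (Fin L))
    (l : EuclideanSpace ℝ (Fin L)) :
    EuclideanSpace ℝ (Fin L) →L[ℝ] EuclideanSpace ℝ (Fin L) →L[ℝ] ℝ :=
  ∫ x, G₂ f l x ∂μ

lemma norm_lt_of_ball {l₀ l : EuclideanSpace ℝ (Fin L)} (hl : l ∈ Metric.ball l₀ 1) :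
    ‖l‖ ≤ ‖l₀‖ + 1 := by
  have := Metric.mem_ball.1 hl
  rw [dist_eq_norm] at this
  calc ‖l‖ = ‖l₀ + (l - l₀)‖ := by rw [add_sub_cancel]
    _ ≤ ‖l₀‖ + ‖l - l₀‖ := norm_add_le _ _
    _ ≤ ‖l₀‖ + 1 := by linarith

section lemmas

variable {μ : Measure X} {f : X → EuclideanSpace ℝ (Fin L)}
  (hf_meas : Measurable f) {B : ℝ} (hf_bdd : ∀ x, ‖f x‖ ≤ B) (hB : 0 ≤ B)

include hf_meas hf_bdd hB

lemma exp_inner_le (l : EuclideanSpace ℝ (Fin L)) (x : X) :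
    Real.exp ⟪l, f x⟫ ≤ Real.exp (‖l‖ * B) := by
  apply Real.exp_le_exp.2
  exact (real_inner_le_norm l (f x)).trans
    (mul_le_mul_of_nonneg_left (hf_bdd x) (norm_nonneg l))

lemma neg_le_inner (l : EuclideanSpace ℝ (Fin L)) (x : X) :
    -(‖l‖ * B) ≤ ⟪l, f x⟫ := by
  have h := abs_real_inner_le_norm l (f x)
  have h2 : ‖l‖ * ‖f x‖ ≤ ‖l‖ * B := mul_le_mul_of_nonneg_left (hf_bdd x) (norm_nonneg l)
  have := (abs_le.1 (h.trans h2)).1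
  linarith

lemma norm_G_le (l : EuclideanSpace ℝ (Fin L)) (x : X) :
    ‖G f l x‖ ≤ B * Real.exp (‖l‖ * B) := by
  rw [G]
  refine (norm_smul_le (Real.exp ⟪l, f x⟫) (innerSL ℝ (f x))).trans ?_
  rw [Real.norm_eq_abs, abs_of_pos (Real.exp_pos _), innerSL_apply_norm, mul_comm (B : ℝ)]
  exact mul_le_mul (exp_inner_le hf_meas hf_bdd hB l x) (hf_bdd x) (norm_nonneg _) (Real.exp_pos _).le

lemma norm_G₂_le (l : EuclideanSpace ℝ (Fin L)) (x : X) :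
    ‖G₂ f l x‖ ≤ B * B * Real.exp (‖l‖ * B) := by
  rw [G₂, ContinuousLinearMap.norm_smulRight_apply, innerSL_apply_norm]
  calc ‖G f l x‖ * ‖f x‖ ≤ (B * Real.exp (‖l‖ * B)) * B :=
        mul_le_mul (norm_G_le hf_meas hf_bdd hB l x) (hf_bdd x) (norm_nonneg _)
          (by positivity)
    _ = B * B * Real.exp (‖l‖ * B) := by ring

lemma measurable_inner_f (l : EuclideanSpace ℝ (Fin L)) :
    Measurable fun x => ⟪l, f x⟫ :=
  Measurable.inner measurable_const hf_meas

lemma aesm_exp (l : EuclideanSpace ℝ (Fin L)) :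
    AEStronglyMeasurable (fun x => Real.exp ⟪l, f x⟫) μ :=
  (Real.measurable_exp.comp (measurable_inner_f hf_meas hf_bdd hB l)).aestronglyMeasurable

lemma aesm_G (l : EuclideanSpace ℝ (Fin L)) :
    AEStronglyMeasurable (fun x => G f l x) μ := by
  have h1 : Continuous fun p : ℝ × EuclideanSpace ℝ (Fin L) => p.1 • innerSL ℝ p.2 :=
    continuous_fst.smul ((innerSL ℝ).continuous.comp continuous_snd)
  exact h1.comp_aestronglyMeasurable
    ((aesm_exp hf_meas hf_bdd hB l).prodMk hf_meas.aestronglyMeasurable)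

lemma aesm_G₂ (l : EuclideanSpace ℝ (Fin L)) :
    AEStronglyMeasurable (fun x => G₂ f l x) μ := by
  have h1 : Continuous fun p : ℝ × EuclideanSpace ℝ (Fin L) =>
      (p.1 • innerSL ℝ p.2).smulRight (innerSL ℝ p.2) := by
    have hinner : Continuous fun p : ℝ × EuclideanSpace ℝ (Fin L) => innerSL ℝ p.2 :=
      (innerSL ℝ).continuous.comp continuous_snd
    exact ((ContinuousLinearMap.smulRightL ℝ (EuclideanSpace ℝ (Fin L))
      (EuclideanSpace ℝ (Fin L) →L[ℝ] ℝ)).continuous.comp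
      (continuous_fst.smul hinner)).clm_apply hinner
  exact h1.comp_aestronglyMeasurable
    ((aesm_exp hf_meas hf_bdd hB l).prodMk hf_meas.aestronglyMeasurable)

lemma int_exp [IsFiniteMeasure μ] (l : EuclideanSpace ℝ (Fin L)) :
    Integrable (fun x => Real.exp ⟪l, f x⟫) μ :=
  (integrable_const (Real.exp (‖l‖ * B))).mono' (aesm_exp hf_meas hf_bdd hB l)
    (Filter.Eventually.of_forall fun x => by
      rw [Real.norm_eq_abs, abs_of_pos (Real.exp_pos _)]
      exact exp_inner_le hf_meas hf_bdd hB l x)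

lemma int_G [IsFiniteMeasure μ] (l : EuclideanSpace ℝ (Fin L)) :
    Integrable (fun x => G f l x) μ :=
  (integrable_const (B * Real.exp (‖l‖ * B))).mono' (aesm_G hf_meas hf_bdd hB l)
    (Filter.Eventually.of_forall fun x => norm_G_le hf_meas hf_bdd hB l x)

lemma int_G₂ [IsFiniteMeasure μ] (l : EuclideanSpace ℝ (Fin L)) :
    Integrable (fun x => G₂ f l x) μ :=
  Integrable.mono' (β := EuclideanSpace ℝ (Fin L) →L[ℝ] EuclideanSpace ℝ (Fin L) →L[ℝ] ℝ)
    (g := fun _ => B * B * Real.exp (‖l‖ * B)) (integrable_const _) (aesm_G₂ hf_meas hf_bdd hB l)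
    (Filter.Eventually.of_forall fun x => norm_G₂_le hf_meas hf_bdd hB l x)

lemma int_G₂_apply [IsFiniteMeasure μ] (l u : EuclideanSpace ℝ (Fin L)) :
    Integrable (fun x => G₂ f l x u) μ :=
  (integrable_const (B * B * Real.exp (‖l‖ * B) * ‖u‖)).mono'
    ((aesm_G₂ hf_meas hf_bdd hB l).apply_continuousLinearMap u)
    (Filter.Eventually.of_forall fun x =>
      ((G₂ f l x).le_opNorm u).trans
        (mul_le_mul_of_nonneg_right (norm_G₂_le hf_meas hf_bdd hB l x) (norm_nonneg u)))

lemma hasFDerivAt_exp_inner (x : X) (l : EuclideanSpace ℝ (Fin L)) :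
    HasFDerivAt (fun l : EuclideanSpace ℝ (Fin L) => Real.exp ⟪l, f x⟫) (G f l x) l := by
  have h1 : HasFDerivAt (fun l : EuclideanSpace ℝ (Fin L) => ⟪l, f x⟫)
      (innerSL ℝ (f x)) l :=
    (innerSL ℝ (f x)).hasFDerivAt.congr_of_eventuallyEq
      (Filter.Eventually.of_forall fun y => by simpa using real_inner_comm (f x) y)
  exact h1.exp

lemma hasFDerivAt_G (x : X) (l : EuclideanSpace ℝ (Fin L)) :
    HasFDerivAt (fun l => G f l x) (G₂ f l x) l :=
  (hasFDerivAt_exp_inner hf_meas hf_bdd hB x l).smul_const (innerSL ℝ (f x))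

lemma hasFDerivAt_Z [IsProbabilityMeasure μ] (l₀ : EuclideanSpace ℝ (Fin L)) :
    HasFDerivAt (Z μ f) (Z₁ μ f l₀) l₀ := by
  apply hasFDerivAt_integral_of_dominated_of_fderiv_le
    (bound := fun _ => B * Real.exp ((‖l₀‖ + 1) * B)) (Metric.ball_mem_nhds l₀ one_pos)
    (Filter.Eventually.of_forall fun l => aesm_exp hf_meas hf_bdd hB l)
    (int_exp hf_meas hf_bdd hB l₀) (aesm_G hf_meas hf_bdd hB l₀)
  · exact Filter.Eventually.of_forall fun x l hl =>
      (norm_G_le hf_meas hf_bdd hB l x).trans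
        (mul_le_mul_of_nonneg_left
          (Real.exp_le_exp.2 (mul_le_mul_of_nonneg_right (norm_lt_of_ball hl) hB)) hB)
  · exact integrable_const _
  · exact Filter.Eventually.of_forall fun x l _ => hasFDerivAt_exp_inner hf_meas hf_bdd hB x l

lemma hasFDerivAt_Z₁ [IsProbabilityMeasure μ] (l₀ : EuclideanSpace ℝ (Fin L)) :
    HasFDerivAt (Z₁ μ f) (Z₂ μ f l₀) l₀ := by
  apply hasFDerivAt_integral_of_dominated_of_fderiv_le
    (bound := fun _ => B * B * Real.exp ((‖l₀‖ + 1) * B)) (Metric.ball_mem_nhds l₀ one_pos)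
    (Filter.Eventually.of_forall fun l => aesm_G hf_meas hf_bdd hB l)
    (int_G hf_meas hf_bdd hB l₀) (aesm_G₂ hf_meas hf_bdd hB l₀)
  · exact Filter.Eventually.of_forall fun x l hl =>
      (norm_G₂_le hf_meas hf_bdd hB l x).trans
        (mul_le_mul_of_nonneg_left
          (Real.exp_le_exp.2 (mul_le_mul_of_nonneg_right (norm_lt_of_ball hl) hB))
          (by positivity))
  · exact integrable_const _
  · exact Filter.Eventually.of_forall fun x l _ => hasFDerivAt_G hf_meas hf_bdd hB x l

lemma continuous_Z₂ [IsProbabilityMeasure μ] : Continuous (Z₂ μ f) := by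
  rw [continuous_iff_continuousAt]
  intro l₀
  apply continuousAt_of_dominated (bound := fun _ => B * B * Real.exp ((‖l₀‖ + 1) * B))
    (Filter.Eventually.of_forall fun l => aesm_G₂ hf_meas hf_bdd hB l)
  · apply Filter.eventually_of_mem (Metric.ball_mem_nhds l₀ one_pos)
    intro l hl
    exact Filter.Eventually.of_forall fun x =>
      (norm_G₂_le hf_meas hf_bdd hB l x).trans
        (mul_le_mul_of_nonneg_left
          (Real.exp_le_exp.2 (mul_le_mul_of_nonneg_right (norm_lt_of_ball hl) hB))
          (by positivity))
  · exact integrable_const _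
  · refine Filter.Eventually.of_forall fun x => ?_
    have hGc : Continuous fun l => G f l x :=
      (Differentiable.continuous fun l =>
        (hasFDerivAt_exp_inner hf_meas hf_bdd hB x l).differentiableAt).smul continuous_const
    have : Continuous fun l => G₂ f l x := by
      have h := ((ContinuousLinearMap.smulRightL ℝ (EuclideanSpace ℝ (Fin L))
        (EuclideanSpace ℝ (Fin L) →L[ℝ] ℝ)).continuous.comp hGc).clm_apply (continuous_const (y := innerSL ℝ (f x)))
      exact h
    exact this.continuousAt

lemma Z_pos [IsProbabilityMeasure μ] (l : EuclideanSpace ℝ (Fin L)) :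
    0 < Z μ f l := by
  have h1 : ∀ x, Real.exp (-(‖l‖ * B)) ≤ Real.exp ⟪l, f x⟫ := fun x =>
    Real.exp_le_exp.2 (neg_le_inner hf_meas hf_bdd hB l x)
  have h2 : (0 : ℝ) < Real.exp (-(‖l‖ * B)) := Real.exp_pos _
  have h3 : Real.exp (-(‖l‖ * B)) ≤ Z μ f l := by
    have := integral_mono (μ := μ) (integrable_const (Real.exp (-(‖l‖ * B))))
      (int_exp hf_meas hf_bdd hB l) h1
    simpa [integral_const, Z] using this
  linarith

end lemmas

end LogPartAux

open LogPartAux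
/-- The log-partition function A(·, μ) is C² on ℝ^L and its second
derivative at λ is the covariance form of f under the exponential family member
E(λ, μ) = μ.withDensity (exp(⟪λ, f⟫ − A(λ, μ))). -/
theorem logPartition_second_derivative
    {X : Type*} [MeasurableSpace X] {L : ℕ} (hL : 0 < L)
    (μ : Measure X) [IsProbabilityMeasure μ]
    (f : X → EuclideanSpace ℝ (Fin L)) (hf_meas : Measurable f)
    (B : ℝ) (hf_bdd : ∀ x, ‖f x‖ ≤ B)
    (A : EuclideanSpace ℝ (Fin L) → ℝ)
    (hA : ∀ l, A l = Real.log (∫ x, Real.exp ⟪l, f x⟫ ∂μ)) :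
    ContDiff ℝ 2 A ∧
    ∀ (l u v : EuclideanSpace ℝ (Fin L)),
      fderiv ℝ (fderiv ℝ A) l u v =
        (∫ x, ⟪u, f x⟫ * ⟪v, f x⟫
            ∂(μ.withDensity (fun x => ENNReal.ofReal (Real.exp (⟪l, f x⟫ - A l)))))
        - (∫ x, ⟪u, f x⟫
            ∂(μ.withDensity (fun x => ENNReal.ofReal (Real.exp (⟪l, f x⟫ - A l)))))
          * (∫ x, ⟪v, f x⟫
            ∂(μ.withDensity (fun x => ENNReal.ofReal (Real.exp (⟪l, f x⟫ - A l))))) := by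
  classical
  -- X is nonempty since μ is a probability measure, hence 0 ≤ B
  have hX : Nonempty X := by
    by_contra h
    have h0 : μ Set.univ = 1 := measure_univ
    rw [Set.univ_eq_empty_iff.2 (not_nonempty_iff.1 h), measure_empty] at h0
    exact zero_ne_one h0
  have hB : 0 ≤ B := le_trans (norm_nonneg _) (hf_bdd hX.some)
  have hAfun : A = fun l => Real.log (Z μ f l) := funext fun l => hA l
  have hZpos : ∀ l, 0 < Z μ f l := Z_pos hf_meas hf_bdd hB
  have hZne : ∀ l, Z μ f l ≠ 0 := fun l => (hZpos l).ne'
  have hA₁ : ∀ l, HasFDerivAt A ((Z μ f l)⁻¹ • Z₁ μ f l) l := by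
    intro l
    rw [hAfun]
    exact (Real.hasDerivAt_log (hZne l)).comp_hasFDerivAt l
      (hasFDerivAt_Z hf_meas hf_bdd hB l)
  have hfderivA : fderiv ℝ A = fun l => (Z μ f l)⁻¹ • Z₁ μ f l :=
    funext fun l => (hA₁ l).fderiv
  have hA₂ : ∀ l, HasFDerivAt (fun l => (Z μ f l)⁻¹ • Z₁ μ f l)
      ((Z μ f l)⁻¹ • Z₂ μ f l +
        ((-(Z μ f l ^ 2)⁻¹) • Z₁ μ f l).smulRight (Z₁ μ f l)) l := by
    intro l
    exact ((hasDerivAt_inv (hZne l)).comp_hasFDerivAt l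
      (hasFDerivAt_Z hf_meas hf_bdd hB l)).smul (hasFDerivAt_Z₁ hf_meas hf_bdd hB l)
  have hfderivA₁ : fderiv ℝ (fun l => (Z μ f l)⁻¹ • Z₁ μ f l) =
      fun l => (Z μ f l)⁻¹ • Z₂ μ f l +
        ((-(Z μ f l ^ 2)⁻¹) • Z₁ μ f l).smulRight (Z₁ μ f l) :=
    funext fun l => (hA₂ l).fderiv
  constructor
  · -- C² smoothness
    rw [show (2 : WithTop ℕ∞) = 1 + 1 from rfl, contDiff_succ_iff_fderiv]
    refine ⟨fun l => (hA₁ l).differentiableAt, by simp, ?_⟩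
    rw [hfderivA, contDiff_one_iff_fderiv]
    refine ⟨fun l => (hA₂ l).differentiableAt, ?_⟩
    rw [hfderivA₁]
    have hcontZ : Continuous (Z μ f) :=
      Differentiable.continuous fun l => (hasFDerivAt_Z hf_meas hf_bdd hB l).differentiableAt
    have hcontZ₁ : Continuous (Z₁ μ f) :=
      Differentiable.continuous fun l => (hasFDerivAt_Z₁ hf_meas hf_bdd hB l).differentiableAt
    have hcontZ₂ : Continuous (Z₂ μ f) := continuous_Z₂ hf_meas hf_bdd hB
    have hc1 : Continuous fun l => (Z μ f l)⁻¹ • Z₂ μ f l :=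
      (hcontZ.inv₀ hZne).smul hcontZ₂
    have hcinner : Continuous fun l => (-(Z μ f l ^ 2)⁻¹) • Z₁ μ f l :=
      (((hcontZ.pow 2).inv₀ fun l => pow_ne_zero 2 (hZne l)).neg).smul hcontZ₁
    have hc2 : Continuous fun l =>
        ((-(Z μ f l ^ 2)⁻¹) • Z₁ μ f l).smulRight (Z₁ μ f l) := by
      have := (((ContinuousLinearMap.smulRightL ℝ (EuclideanSpace ℝ (Fin L))
        (EuclideanSpace ℝ (Fin L) →L[ℝ] ℝ)).continuous.comp hcinner).clm_apply hcontZ₁)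
      exact this
    exact hc1.add hc2
  · -- second derivative formula
    intro l u v
    rw [hfderivA, hfderivA₁]
    -- withDensity rewriting
    have hd_meas : Measurable fun x => (Real.exp (⟪l, f x⟫ - A l)).toNNReal :=
      (Real.measurable_exp.comp
        ((measurable_inner_f hf_meas hf_bdd hB l).sub measurable_const)).real_toNNReal
    have hwd : ∀ g : X → ℝ,
        (∫ x, g x ∂(μ.withDensity fun x => ENNReal.ofReal (Real.exp (⟪l, f x⟫ - A l)))) =
        ∫ x, (Z μ f l)⁻¹ * (Real.exp ⟪l, f x⟫ * g x) ∂μ := by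
      intro g
      have h1 : (fun x => ENNReal.ofReal (Real.exp (⟪l, f x⟫ - A l))) =
          fun x => ((Real.exp (⟪l, f x⟫ - A l)).toNNReal : ℝ≥0∞) := rfl
      rw [h1, integral_withDensity_eq_integral_smul hd_meas g]
      congr 1
      funext x
      rw [NNReal.smul_def, Real.coe_toNNReal _ (Real.exp_nonneg _)]
      rw [Real.exp_sub, show A l = Real.log (Z μ f l) from hA l, Real.exp_log (hZpos l)]
      show Real.exp ⟪l, f x⟫ / Z μ f l * g x = _
      ring
    rw [hwd, hwd, hwd]
    rw [integral_const_mul, integral_const_mul, integral_const_mul]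
    -- compute the left-hand side
    have hZ₁u : ∀ u, Z₁ μ f l u = ∫ x, Real.exp ⟪l, f x⟫ * ⟪u, f x⟫ ∂μ := by
      intro u
      rw [Z₁, ContinuousLinearMap.integral_apply (int_G hf_meas hf_bdd hB l)]
      congr 1
      funext x
      simp only [G, ContinuousLinearMap.smul_apply, smul_eq_mul, innerSL_apply_apply]
      rw [real_inner_comm (f x) u]
    have hZ₂uv : Z₂ μ f l u v = ∫ x, Real.exp ⟪l, f x⟫ * (⟪u, f x⟫ * ⟪v, f x⟫) ∂μ := by
      rw [Z₂, ContinuousLinearMap.integral_apply (int_G₂ hf_meas hf_bdd hB l),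
        ContinuousLinearMap.integral_apply (int_G₂_apply hf_meas hf_bdd hB l u)]
      congr 1
      funext x
      simp only [G₂, G, ContinuousLinearMap.smulRight_apply, ContinuousLinearMap.smul_apply,
        smul_eq_mul, innerSL_apply_apply]
      rw [real_inner_comm (f x) u, real_inner_comm (f x) v]
      ring
    simp only [ContinuousLinearMap.add_apply, ContinuousLinearMap.smul_apply,
      ContinuousLinearMap.smulRight_apply, smul_eq_mul]
    rw [hZ₂uv, hZ₁u u, hZ₁u v]
    rw [← inv_pow]
    ring
end

section
/- Assume that the system {1, f_1, …, f_L} is linearly independent modulo μ. Then the moment map λ ↦ ∫_X f dE(λ, μ) from ℝ^L to ℝ^L is injective; in particular, for a given moment vector m the Lagrange multiplier λ solving ∫_X f dE(λ, μ) = m, if it exists, is unique. -/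
open MeasureTheory
open scoped RealInnerProductSpace ENNReal NNReal

/-- If {1, f_1, …, f_L} is linearly independent modulo μ, then the moment
map λ ↦ ∫ f dE(λ, μ) is injective; in particular the Lagrange multiplier solving
∫ f dE(λ, μ) = m, if it exists, is unique. -/
theorem moment_map_injective
    {X : Type*} [MeasurableSpace X] {L : ℕ} (hL : 0 < L)
    (μ : Measure X) [IsProbabilityMeasure μ]
    (f : X → EuclideanSpace ℝ (Fin L)) (hf_meas : Measurable f)
    (B : ℝ) (hf_bdd : ∀ x, ‖f x‖ ≤ B)
    (hindep : ∀ (l0 : ℝ) (l : EuclideanSpace ℝ (Fin L)),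
      (l0, l) ≠ (0, 0) → μ {x | l0 + ⟪l, f x⟫ = 0} = 0)
    (A : EuclideanSpace ℝ (Fin L) → ℝ)
    (hA : ∀ l, A l = Real.log (∫ x, Real.exp ⟪l, f x⟫ ∂μ)) :
    Function.Injective (fun l : EuclideanSpace ℝ (Fin L) =>
      ∫ x, f x
        ∂(μ.withDensity (fun x => ENNReal.ofReal (Real.exp (⟪l, f x⟫ - A l))))) := by
  intro l₁ l₂ hmom
  by_contra hne
  set d : EuclideanSpace ℝ (Fin L) := l₁ - l₂ with hddef
  have hdne : d ≠ 0 := sub_ne_zero.mpr hne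
  have hXne : Nonempty X := by
    rcases isEmpty_or_nonempty X with h | h
    · exfalso
      have h1 : μ Set.univ = 1 := measure_univ
      rw [Set.univ_eq_empty_iff.mpr h] at h1
      simp at h1
    · exact h
  have hB : 0 ≤ B := le_trans (norm_nonneg _) (hf_bdd (Classical.arbitrary X))
  -- basic measurability / bounds
  have hmi : ∀ l : EuclideanSpace ℝ (Fin L), Measurable fun x => ⟪l, f x⟫ :=
    fun l => measurable_const.inner hf_meas
  have hbi : ∀ (l : EuclideanSpace ℝ (Fin L)) x, |⟪l, f x⟫| ≤ ‖l‖ * B := by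
    intro l x
    calc |⟪l, f x⟫| ≤ ‖l‖ * ‖f x‖ := abs_real_inner_le_norm l (f x)
    _ ≤ ‖l‖ * B := mul_le_mul_of_nonneg_left (hf_bdd x) (norm_nonneg l)
  have hintR : ∀ (g : X → ℝ), Measurable g → ∀ C : ℝ, (∀ x, ‖g x‖ ≤ C) → Integrable g μ :=
    fun g hg C h => (integrable_const C).mono' hg.aestronglyMeasurable
      (Filter.Eventually.of_forall h)
  -- integrability of exp of inner
  have hintexp : ∀ l : EuclideanSpace ℝ (Fin L),
      Integrable (fun x => Real.exp ⟪l, f x⟫) μ := by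
    intro l
    refine hintR _ (hmi l).exp (Real.exp (‖l‖ * B)) fun x => ?_
    rw [Real.norm_eq_abs, abs_of_pos (Real.exp_pos _)]
    exact Real.exp_le_exp.mpr ((le_abs_self _).trans (hbi l x))
  -- positivity of the partition function
  have hZpos : ∀ l : EuclideanSpace ℝ (Fin L), 0 < ∫ x, Real.exp ⟪l, f x⟫ ∂μ := by
    intro l
    have hle : ∀ x, Real.exp (-(‖l‖ * B)) ≤ Real.exp ⟪l, f x⟫ := fun x =>
      Real.exp_le_exp.mpr ((neg_le_neg (hbi l x)).trans (neg_abs_le _))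
    have := integral_mono (integrable_const (Real.exp (-(‖l‖ * B)))) (hintexp l) hle
    rw [integral_const, probReal_univ, one_smul] at this
    exact lt_of_lt_of_le (Real.exp_pos _) this
  have hexpA : ∀ l : EuclideanSpace ℝ (Fin L),
      Real.exp (A l) = ∫ x, Real.exp ⟪l, f x⟫ ∂μ := by
    intro l; rw [hA l]; exact Real.exp_log (hZpos l)
  -- densities
  set p : EuclideanSpace ℝ (Fin L) → X → ℝ :=
    fun l x => Real.exp (⟪l, f x⟫ - A l) with hpdef
  have hpmeas : ∀ l, Measurable (p l) := fun l => ((hmi l).sub measurable_const).exp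
  have hppos : ∀ l x, 0 < p l x := fun l x => Real.exp_pos _
  have hpbdd : ∀ l x, ‖p l x‖ ≤ Real.exp (‖l‖ * B + |A l|) := by
    intro l x
    rw [Real.norm_eq_abs, abs_of_pos (hppos l x)]
    refine Real.exp_le_exp.mpr ?_
    have h1 := hbi l x
    have h2 : -(|A l|) ≤ -(A l) := neg_le_neg (le_abs_self _)
    have h3 : ⟪l, f x⟫ ≤ ‖l‖ * B := (le_abs_self _).trans h1
    nlinarith [le_abs_self (A l), neg_abs_le (A l)]
  have hpint : ∀ l, Integrable (p l) μ := fun l =>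
    hintR _ (hpmeas l) _ (hpbdd l)
  have hpone : ∀ l, ∫ x, p l x ∂μ = 1 := by
    intro l
    have : ∀ x, p l x = Real.exp ⟪l, f x⟫ / Real.exp (A l) := by
      intro x; rw [hpdef]; exact Real.exp_sub _ _
    rw [show (fun x => p l x) = fun x => Real.exp ⟪l, f x⟫ / Real.exp (A l) from funext this,
      integral_div, ← hexpA l, div_self (Real.exp_ne_zero _)]
  -- withDensity integral rewrite
  have hwd : ∀ l : EuclideanSpace ℝ (Fin L),
      (∫ x, f x ∂(μ.withDensity (fun x => ENNReal.ofReal (p l x))))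
        = ∫ x, p l x • f x ∂μ := by
    intro l
    rw [show (fun x => ENNReal.ofReal (p l x)) = (fun x => ((p l x).toNNReal : ℝ≥0∞)) from rfl,
      integral_withDensity_eq_integral_smul (hpmeas l).real_toNNReal]
    congr 1; ext x; rw [NNReal.smul_def, Real.coe_toNNReal _ (hppos l x).le]
  -- vector integrability of p • f
  have hvint : ∀ l, Integrable (fun x => p l x • f x) μ := by
    intro l
    refine (integrable_const (Real.exp (‖l‖ * B + |A l|) * B)).mono'
      ((hpmeas l).aestronglyMeasurable.smul hf_meas.aestronglyMeasurable)
      (Filter.Eventually.of_forall fun x => ?_)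
    rw [norm_smul]
    have hB0 : (0:ℝ) ≤ B := le_trans (norm_nonneg _) (hf_bdd x)
    exact mul_le_mul (hpbdd l x) (hf_bdd x) (norm_nonneg _) (Real.exp_pos _).le
  -- equality of directional moments
  have hmom' : ∫ x, p l₁ x • f x ∂μ = ∫ x, p l₂ x • f x ∂μ := by
    have := hmom
    simp only at this
    rw [← hwd l₁, ← hwd l₂]; exact this
  have hdir : ∫ x, ⟪d, f x⟫ * p l₁ x ∂μ = ∫ x, ⟪d, f x⟫ * p l₂ x ∂μ := by
    have e : ∀ l : EuclideanSpace ℝ (Fin L),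
        ∫ x, ⟪d, f x⟫ * p l x ∂μ = ⟪d, ∫ x, p l x • f x ∂μ⟫ := by
      intro l
      rw [← integral_inner (hvint l) d]
      congr 1; ext x; rw [real_inner_smul_right]; ring
    rw [e l₁, e l₂, hmom']
  -- the nonnegative function G
  set c : ℝ := A l₁ - A l₂ with hcdef
  set t : X → ℝ := fun x => ⟪d, f x⟫ - c with htdef
  set G : X → ℝ := fun x => t x * (p l₁ x - p l₂ x) with hGdef
  have hp12 : ∀ x, p l₁ x = p l₂ x * Real.exp (t x) := by
    intro x
    show Real.exp (⟪l₁, f x⟫ - A l₁)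
      = Real.exp (⟪l₂, f x⟫ - A l₂) * Real.exp (⟪d, f x⟫ - c)
    rw [← Real.exp_add]
    have h : ⟪d, f x⟫ = ⟪l₁, f x⟫ - ⟪l₂, f x⟫ := by
      rw [hddef]; exact inner_sub_left _ _ _
    congr 1
    rw [h, hcdef]; ring
  have hGnonneg : ∀ x, 0 ≤ G x := by
    intro x
    rw [hGdef]
    simp only [hp12 x]
    have hp2 := (hppos l₂ x).le
    rcases le_or_gt 0 (t x) with h | h
    · have h1 : 1 ≤ Real.exp (t x) := Real.one_le_exp h
      calc (0:ℝ) ≤ t x * ((Real.exp (t x) - 1) * p l₂ x) :=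
            mul_nonneg h (mul_nonneg (by linarith) hp2)
        _ = t x * (p l₂ x * Real.exp (t x) - p l₂ x) := by ring
    · have h1 : Real.exp (t x) < 1 := Real.exp_lt_one_iff.mpr h
      calc (0:ℝ) ≤ (-(t x)) * ((1 - Real.exp (t x)) * p l₂ x) :=
            mul_nonneg (by linarith) (mul_nonneg (by linarith) hp2)
        _ = t x * (p l₂ x * Real.exp (t x) - p l₂ x) := by ring
  -- integral of G is zero
  have htmeas : Measurable t := (hmi d).sub measurable_const
  have htbdd : ∀ x, |t x| ≤ ‖d‖ * B + |c| := fun x =>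
    (abs_sub _ _).trans (add_le_add (hbi d x) le_rfl)
  have hi1 : Integrable (fun x => ⟪d, f x⟫ * p l₁ x) μ := by
    refine hintR _ ((hmi d).mul (hpmeas l₁)) ((‖d‖ * B) * Real.exp (‖l₁‖ * B + |A l₁|)) fun x => ?_
    rw [Real.norm_eq_abs, abs_mul]
    exact mul_le_mul (hbi d x) (hpbdd l₁ x) (abs_nonneg _)
      (mul_nonneg (norm_nonneg _) hB)
  have hi2 : Integrable (fun x => ⟪d, f x⟫ * p l₂ x) μ := by
    refine hintR _ ((hmi d).mul (hpmeas l₂)) ((‖d‖ * B) * Real.exp (‖l₂‖ * B + |A l₂|)) fun x => ?_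
    rw [Real.norm_eq_abs, abs_mul]
    exact mul_le_mul (hbi d x) (hpbdd l₂ x) (abs_nonneg _) (mul_nonneg (norm_nonneg _) hB)
  have hGmeas : Measurable G := htmeas.mul ((hpmeas l₁).sub (hpmeas l₂))
  have hGint : Integrable G μ := by
    refine hintR _ hGmeas ((‖d‖ * B + |c|) *
      (Real.exp (‖l₁‖ * B + |A l₁|) + Real.exp (‖l₂‖ * B + |A l₂|))) fun x => ?_
    rw [Real.norm_eq_abs, hGdef, abs_mul]
    refine mul_le_mul (htbdd x) ?_ (abs_nonneg _)
      (le_trans (abs_nonneg _) (htbdd x))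
    calc |p l₁ x - p l₂ x| ≤ |p l₁ x| + |p l₂ x| := abs_sub _ _
    _ ≤ _ := add_le_add (hpbdd l₁ x) (hpbdd l₂ x)
  have hGzero : ∫ x, G x ∂μ = 0 := by
    have hrw : ∀ x, G x = (⟪d, f x⟫ * p l₁ x - ⟪d, f x⟫ * p l₂ x)
        - (c * p l₁ x - c * p l₂ x) := by
      intro x; rw [hGdef, htdef]; ring
    rw [show (fun x => G x) = fun x =>
      (⟪d, f x⟫ * p l₁ x - ⟪d, f x⟫ * p l₂ x) - (c * p l₁ x - c * p l₂ x) from funext hrw]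
    have h3 : Integrable (fun x => ⟪d, f x⟫ * p l₁ x - ⟪d, f x⟫ * p l₂ x) μ := hi1.sub hi2
    have hc1 : Integrable (fun x => c * p l₁ x) μ := (hpint l₁).const_mul c
    have hc2 : Integrable (fun x => c * p l₂ x) μ := (hpint l₂).const_mul c
    have h4 : Integrable (fun x => c * p l₁ x - c * p l₂ x) μ := hc1.sub hc2
    rw [integral_sub h3 h4, integral_sub hi1 hi2, integral_sub hc1 hc2,
      integral_const_mul c, integral_const_mul c, hpone, hpone, hdir]
    ring
  -- conclude G = 0 a.e.
  have hGae : (fun x => G x) =ᵐ[μ] 0 := by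
    rw [← integral_eq_zero_iff_of_nonneg hGnonneg hGint]
    exact hGzero
  have htae : ∀ᵐ x ∂μ, t x = 0 := by
    filter_upwards [hGae] with x hx
    simp only [Pi.zero_apply] at hx
    by_contra ht
    have h1 : t x + 1 < Real.exp (t x) := Real.add_one_lt_exp ht
    have hx' : p l₂ x * (t x * (Real.exp (t x) - 1)) = 0 := by
      rw [hGdef] at hx; rw [← hx]; simp only [hp12 x]; ring
    have hp2 := hppos l₂ x
    have h0 : t x * (Real.exp (t x) - 1) = 0 := by
      rcases mul_eq_zero.mp hx' with h' | h'
      · exact absurd h' (ne_of_gt hp2)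
      · exact h'
    rcases lt_trichotomy (t x) 0 with h | h | h
    · have he : Real.exp (t x) < 1 := Real.exp_lt_one_iff.mpr h
      have : 0 < t x * (Real.exp (t x) - 1) := mul_pos_of_neg_of_neg h (by linarith)
      linarith
    · exact ht h
    · have : 0 < t x * (Real.exp (t x) - 1) := mul_pos h (by linarith)
      linarith
  -- contradiction with linear independence
  have hS : μ {x | -c + ⟪d, f x⟫ = 0} = 0 := by
    apply hindep (-c) d
    simp [Prod.ext_iff, hdne]
  have hSc : μ {x | ¬ (-c + ⟪d, f x⟫ = 0)} = 0 := by
    have : ∀ᵐ x ∂μ, -c + ⟪d, f x⟫ = 0 := by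
      filter_upwards [htae] with x hx
      have hx' : ⟪d, f x⟫ - c = 0 := hx
      linarith
    exact ae_iff.mp this
  have : μ Set.univ = 0 := by
    have hle := measure_union_le (μ := μ) {x | -c + ⟪d, f x⟫ = 0} {x | ¬ (-c + ⟪d, f x⟫ = 0)}
    have hun : {x | -c + ⟪d, f x⟫ = 0} ∪ {x | ¬ (-c + ⟪d, f x⟫ = 0)} = Set.univ := by
      ext x; simp [em]
    rw [hun, hS, hSc] at hle
    simpa using hle
  simp [measure_univ] at this
end

section
/- Assume that the system {1, f_1, …, f_L} is linearly independent modulo μ. Let U ⊆ ℝ^L be an open set and suppose λ̂ : U → ℝ^L satisfies the Lagrange-multiplier equation ∫_X f dE(λ̂(m), μ) = m for every m ∈ U. Then λ̂ is differentiable on U, and its derivative at m is the inverse of the Hessian of the log-partition function: Dλ̂(m) = (Hess_λ A(λ̂(m), μ))^{-1}, i.e. the inverse of the covariance matrix of f under E(λ̂(m), μ). -/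
open MeasureTheory
open scoped RealInnerProductSpace

open Metric Filter Set
open scoped Topology ENNReal NNReal

set_option synthInstance.maxHeartbeats 1000000
set_option maxHeartbeats 1000000
namespace Lag12

variable {X : Type*} [MeasurableSpace X] {L : ℕ}
variable {μ : Measure X} [IsProbabilityMeasure μ]
variable {f : X → EuclideanSpace ℝ (Fin L)} {B : ℝ}

lemma meas_inner (hf : Measurable f) (l : EuclideanSpace ℝ (Fin L)) :
    Measurable fun x => ⟪l, f x⟫ :=
  (innerSL ℝ l).continuous.measurable.comp hf

lemma inner_le (hB : ∀ x, ‖f x‖ ≤ B) (l : EuclideanSpace ℝ (Fin L)) (x : X) :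
    |⟪l, f x⟫| ≤ ‖l‖ * B :=
  (abs_real_inner_le_norm l (f x)).trans
    (mul_le_mul_of_nonneg_left (hB x) (norm_nonneg l))

lemma int_exp_smul {Y : Type*} [NormedAddCommGroup Y] [NormedSpace ℝ Y]
    (hf : Measurable f) (hB : ∀ x, ‖f x‖ ≤ B) (l : EuclideanSpace ℝ (Fin L)) {g : X → Y}
    (hg : AEStronglyMeasurable g μ) {C : ℝ} (hC : ∀ x, ‖g x‖ ≤ C) :
    Integrable (fun x => Real.exp ⟪l, f x⟫ • g x) μ := by
  refine (integrable_const (Real.exp (‖l‖ * B) * C)).mono'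
    (((Real.measurable_exp.comp (meas_inner hf l)).aestronglyMeasurable).smul hg)
    (ae_of_all _ fun x => ?_)
  rw [norm_smul, Real.norm_eq_abs, abs_of_pos (Real.exp_pos _)]
  have h1 : Real.exp ⟪l, f x⟫ ≤ Real.exp (‖l‖ * B) :=
    Real.exp_le_exp.2 ((le_abs_self _).trans (inner_le hB l x))
  exact mul_le_mul h1 (hC x) (norm_nonneg _) (Real.exp_pos _).le

lemma int_exp (hf : Measurable f) (hB : ∀ x, ‖f x‖ ≤ B) (l : EuclideanSpace ℝ (Fin L)) :
    Integrable (fun x => Real.exp ⟪l, f x⟫) μ := by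
  have := int_exp_smul (μ := μ) hf hB l (aestronglyMeasurable_const (b := (1:ℝ)))
    (C := 1) (fun x => by rw [norm_one])
  simpa using this

lemma Z_pos (hf : Measurable f) (hB : ∀ x, ‖f x‖ ≤ B) (l : EuclideanSpace ℝ (Fin L)) :
    0 < ∫ x, Real.exp ⟪l, f x⟫ ∂μ :=
  integral_exp_pos (int_exp hf hB l)


noncomputable def Zf (μ : Measure X) (f : X → EuclideanSpace ℝ (Fin L))
    (l : EuclideanSpace ℝ (Fin L)) : ℝ := ∫ x, Real.exp ⟪l, f x⟫ ∂μ

noncomputable def Ff (μ : Measure X) (f : X → EuclideanSpace ℝ (Fin L))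
    (l : EuclideanSpace ℝ (Fin L)) : EuclideanSpace ℝ (Fin L) :=
  ∫ x, Real.exp ⟪l, f x⟫ • f x ∂μ

/-- rank one operator v ↦ ⟪f x, v⟫ • f x -/
noncomputable def M (f : X → EuclideanSpace ℝ (Fin L)) (x : X) :
    EuclideanSpace ℝ (Fin L) →L[ℝ] EuclideanSpace ℝ (Fin L) :=
  (innerSL ℝ (f x)).smulRight (f x)

noncomputable def Zd (μ : Measure X) (f : X → EuclideanSpace ℝ (Fin L))
    (l : EuclideanSpace ℝ (Fin L)) : EuclideanSpace ℝ (Fin L) →L[ℝ] ℝ :=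
  ∫ x, Real.exp ⟪l, f x⟫ • innerSL ℝ (f x) ∂μ

noncomputable def Fd (μ : Measure X) (f : X → EuclideanSpace ℝ (Fin L))
    (l : EuclideanSpace ℝ (Fin L)) : EuclideanSpace ℝ (Fin L) →L[ℝ] EuclideanSpace ℝ (Fin L) :=
  ∫ x, Real.exp ⟪l, f x⟫ • M f x ∂μ

noncomputable def Hf (μ : Measure X) (f : X → EuclideanSpace ℝ (Fin L))
    (l : EuclideanSpace ℝ (Fin L)) : EuclideanSpace ℝ (Fin L) →L[ℝ] EuclideanSpace ℝ (Fin L) :=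
  (Zf μ f l)⁻¹ • Fd μ f l + ((-((Zf μ f l) ^ 2)⁻¹) • Zd μ f l).smulRight (Ff μ f l)

lemma smul_smulRight' (a : ℝ) (c : EuclideanSpace ℝ (Fin L) →L[ℝ] ℝ)
    (u : EuclideanSpace ℝ (Fin L)) : (a • c).smulRight u = a • c.smulRight u := by
  ext w
  simp [smul_smul, mul_assoc]

lemma hasFDerivAt_exp_inner (c l₀ : EuclideanSpace ℝ (Fin L)) :
    HasFDerivAt (fun l : EuclideanSpace ℝ (Fin L) => Real.exp ⟪l, c⟫)
      (Real.exp ⟪l₀, c⟫ • innerSL ℝ c) l₀ := by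
  have h1 : HasFDerivAt (fun l : EuclideanSpace ℝ (Fin L) => ⟪l, c⟫) (innerSL ℝ c) l₀ := by
    have he : (fun l : EuclideanSpace ℝ (Fin L) => ⟪l, c⟫)
        = fun l : EuclideanSpace ℝ (Fin L) => (innerSL ℝ c) l :=
      funext fun l => by simp [mul_comm]; exact real_inner_comm _ _
    rw [he]
    exact (innerSL ℝ c).hasFDerivAt
  exact (Real.hasDerivAt_exp _).comp_hasFDerivAt l₀ h1

lemma hasFDerivAt_exp_inner_smul (c l₀ : EuclideanSpace ℝ (Fin L)) :
    HasFDerivAt (fun l : EuclideanSpace ℝ (Fin L) => Real.exp ⟪l, c⟫ • c)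
      ((Real.exp ⟪l₀, c⟫ • innerSL ℝ c).smulRight c) l₀ :=
  (hasFDerivAt_exp_inner c l₀).smul_const c

lemma aesm_exp (hf : Measurable f) (l : EuclideanSpace ℝ (Fin L)) :
    AEStronglyMeasurable (fun x => Real.exp ⟪l, f x⟫) μ :=
  (Real.measurable_exp.comp (meas_inner hf l)).aestronglyMeasurable

lemma aesm_innerSL (hf : Measurable f) :
    AEStronglyMeasurable (fun x => innerSL ℝ (f x)) μ :=
  (innerSL ℝ).continuous.comp_aestronglyMeasurable hf.aestronglyMeasurable

lemma norm_M_le (hB : ∀ x, ‖f x‖ ≤ B) (hB0 : 0 ≤ B) (x : X) : ‖M f x‖ ≤ B * B := by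
  rw [M, ContinuousLinearMap.norm_smulRight_apply, innerSL_apply_norm]
  exact mul_le_mul (hB x) (hB x) (norm_nonneg _) hB0

lemma aesm_M (hf : Measurable f) : AEStronglyMeasurable (M f) μ := by
  have hc : Continuous fun y : EuclideanSpace ℝ (Fin L) => (innerSL ℝ y).smulRight y :=
    isBoundedBilinearMap_smulRight.continuous.comp ((innerSL ℝ).continuous.prodMk continuous_id)
  exact hc.comp_aestronglyMeasurable hf.aestronglyMeasurable

lemma exp_ball_le (hB : ∀ x, ‖f x‖ ≤ B) (hB0 : 0 ≤ B) {l₀ l : EuclideanSpace ℝ (Fin L)}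
    (hl : l ∈ ball l₀ 1) (x : X) : Real.exp ⟪l, f x⟫ ≤ Real.exp ((‖l₀‖ + 1) * B) := by
  have hd := mem_ball_iff_norm.mp hl
  have h2 : ‖l‖ ≤ ‖l₀‖ + ‖l - l₀‖ := by
    simpa using norm_add_le l₀ (l - l₀)
  have h1 : ‖l‖ ≤ ‖l₀‖ + 1 := by linarith
  refine Real.exp_le_exp.2 ?_
  calc ⟪l, f x⟫ ≤ |⟪l, f x⟫| := le_abs_self _
  _ ≤ ‖l‖ * B := inner_le hB l x
  _ ≤ (‖l₀‖ + 1) * B := mul_le_mul_of_nonneg_right h1 hB0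

lemma hasFDerivAt_Zf (hf : Measurable f) (hB : ∀ x, ‖f x‖ ≤ B) (hB0 : 0 ≤ B)
    (l₀ : EuclideanSpace ℝ (Fin L)) : HasFDerivAt (Zf μ f) (Zd μ f l₀) l₀ := by
  show HasFDerivAt (fun l => ∫ x, Real.exp ⟪l, f x⟫ ∂μ)
    (∫ x, Real.exp ⟪l₀, f x⟫ • innerSL ℝ (f x) ∂μ) l₀
  refine hasFDerivAt_integral_of_dominated_of_fderiv_le
    (F' := fun l x => Real.exp ⟪l, f x⟫ • innerSL ℝ (f x))
    (bound := fun _ => Real.exp ((‖l₀‖ + 1) * B) * B) (Metric.ball_mem_nhds l₀ one_pos)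
    (Eventually.of_forall fun l => aesm_exp hf l) (int_exp hf hB l₀)
    ((aesm_exp hf l₀).smul (aesm_innerSL hf)) (ae_of_all _ fun x l hl => ?_)
    (integrable_const _) (ae_of_all _ fun x l _ => hasFDerivAt_exp_inner (f x) l)
  beta_reduce
  rw [norm_smul _ (innerSL ℝ (f x)), Real.norm_eq_abs, abs_of_pos (Real.exp_pos _),
    innerSL_apply_norm]
  exact mul_le_mul (exp_ball_le hB hB0 hl x) (hB x) (norm_nonneg _) (Real.exp_pos _).le

lemma hasFDerivAt_Ff (hf : Measurable f) (hB : ∀ x, ‖f x‖ ≤ B) (hB0 : 0 ≤ B)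
    (l₀ : EuclideanSpace ℝ (Fin L)) : HasFDerivAt (Ff μ f) (Fd μ f l₀) l₀ := by
  show HasFDerivAt (fun l => ∫ x, Real.exp ⟪l, f x⟫ • f x ∂μ)
    (∫ x, Real.exp ⟪l₀, f x⟫ • M f x ∂μ) l₀
  refine hasFDerivAt_integral_of_dominated_of_fderiv_le
    (F' := fun l x => Real.exp ⟪l, f x⟫ • M f x)
    (bound := fun _ => Real.exp ((‖l₀‖ + 1) * B) * (B * B)) (Metric.ball_mem_nhds l₀ one_pos)
    (Eventually.of_forall fun l =>
      (aesm_exp hf l).smul hf.aestronglyMeasurable)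
    (int_exp_smul hf hB l₀ hf.aestronglyMeasurable hB)
    ((aesm_exp hf l₀).smul (aesm_M hf)) (ae_of_all _ fun x l hl => ?_)
    (integrable_const _) (ae_of_all _ fun x l _ => ?_)
  · beta_reduce
    rw [norm_smul (Real.exp ⟪l, f x⟫) (M f x), Real.norm_eq_abs, abs_of_pos (Real.exp_pos _)]
    exact mul_le_mul (exp_ball_le hB hB0 hl x) (norm_M_le hB hB0 x)
      (norm_nonneg _) (Real.exp_pos _).le
  · have h := hasFDerivAt_exp_inner_smul (f x) l
    rw [smul_smulRight'] at h
    exact h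

lemma continuousAt_Zd (hf : Measurable f) (hB : ∀ x, ‖f x‖ ≤ B) (hB0 : 0 ≤ B)
    (l₀ : EuclideanSpace ℝ (Fin L)) : ContinuousAt (Zd μ f) l₀ := by
  show ContinuousAt (fun l => ∫ x, Real.exp ⟪l, f x⟫ • innerSL ℝ (f x) ∂μ) l₀
  refine continuousAt_of_dominated
    (bound := fun _ => Real.exp ((‖l₀‖ + 1) * B) * B)
    (Eventually.of_forall fun l => (aesm_exp hf l).smul (aesm_innerSL hf))
    ?_ (integrable_const _) (ae_of_all _ fun x => ?_)
  · filter_upwards [Metric.ball_mem_nhds l₀ one_pos] with l hl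
    refine ae_of_all _ fun x => ?_
    rw [norm_smul _ (innerSL ℝ (f x)), Real.norm_eq_abs, abs_of_pos (Real.exp_pos _),
      innerSL_apply_norm]
    exact mul_le_mul (exp_ball_le hB hB0 hl x) (hB x) (norm_nonneg _) (Real.exp_pos _).le
  · exact ((Real.continuous_exp.comp (continuous_id.inner continuous_const)).smul
      continuous_const).continuousAt

lemma continuousAt_Fd (hf : Measurable f) (hB : ∀ x, ‖f x‖ ≤ B) (hB0 : 0 ≤ B)
    (l₀ : EuclideanSpace ℝ (Fin L)) : ContinuousAt (Fd μ f) l₀ := by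
  show ContinuousAt (fun l => ∫ x, Real.exp ⟪l, f x⟫ • M f x ∂μ) l₀
  refine continuousAt_of_dominated
    (bound := fun _ => Real.exp ((‖l₀‖ + 1) * B) * (B * B))
    (Eventually.of_forall fun l => (aesm_exp hf l).smul (aesm_M hf))
    ?_ (integrable_const _) (ae_of_all _ fun x => ?_)
  · filter_upwards [Metric.ball_mem_nhds l₀ one_pos] with l hl
    refine ae_of_all _ fun x => ?_
    rw [norm_smul (Real.exp ⟪l, f x⟫) (M f x), Real.norm_eq_abs, abs_of_pos (Real.exp_pos _)]
    exact mul_le_mul (exp_ball_le hB hB0 hl x) (norm_M_le hB hB0 x)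
      (norm_nonneg _) (Real.exp_pos _).le
  · exact ((Real.continuous_exp.comp (continuous_id.inner continuous_const)).smul
      continuous_const).continuousAt

lemma Zf_pos (hf : Measurable f) (hB : ∀ x, ‖f x‖ ≤ B) (l : EuclideanSpace ℝ (Fin L)) :
    0 < Zf μ f l := Z_pos hf hB l

lemma hasFDerivAt_G' (hf : Measurable f) (hB : ∀ x, ‖f x‖ ≤ B) (hB0 : 0 ≤ B)
    {G : EuclideanSpace ℝ (Fin L) → EuclideanSpace ℝ (Fin L)}
    (hGeq : ∀ l, G l = (Zf μ f l)⁻¹ • Ff μ f l) (l₀ : EuclideanSpace ℝ (Fin L)) :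
    HasFDerivAt G (Hf μ f l₀) l₀ := by
  have hZ := hasFDerivAt_Zf (μ := μ) hf hB hB0 l₀
  have hF := hasFDerivAt_Ff (μ := μ) hf hB hB0 l₀
  have hZpos := Zf_pos (μ := μ) hf hB l₀
  have hinv : HasFDerivAt (fun l => (Zf μ f l)⁻¹)
      ((-(Zf μ f l₀ ^ 2)⁻¹) • Zd μ f l₀) l₀ :=
    (hasDerivAt_inv hZpos.ne').comp_hasFDerivAt l₀ hZ
  have h := hinv.smul hF
  have he : G = fun l => (Zf μ f l)⁻¹ • Ff μ f l := funext hGeq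
  rw [he]
  exact h

lemma Fd_apply (hf : Measurable f) (hB : ∀ x, ‖f x‖ ≤ B) (hB0 : 0 ≤ B)
    (l v : EuclideanSpace ℝ (Fin L)) :
    Fd μ f l v = ∫ x, (Real.exp ⟪l, f x⟫ * ⟪v, f x⟫) • f x ∂μ := by
  rw [Fd, ContinuousLinearMap.integral_apply
    (int_exp_smul hf hB l (aesm_M hf) (norm_M_le hB hB0))]
  refine integral_congr_ae (ae_of_all _ fun x => ?_)
  beta_reduce
  show Real.exp ⟪l, f x⟫ • (M f x) v = _
  rw [M, ContinuousLinearMap.smulRight_apply, innerSL_apply_apply, smul_smul,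
    real_inner_comm (f x) v]

lemma Zd_apply (hf : Measurable f) (hB : ∀ x, ‖f x‖ ≤ B)
    (l v : EuclideanSpace ℝ (Fin L)) :
    Zd μ f l v = ∫ x, Real.exp ⟪l, f x⟫ * ⟪v, f x⟫ ∂μ := by
  rw [Zd, ContinuousLinearMap.integral_apply
    (int_exp_smul hf hB l (aesm_innerSL hf) (fun x => by rw [innerSL_apply_norm]; exact hB x))]
  refine integral_congr_ae (ae_of_all _ fun x => ?_)
  beta_reduce
  show Real.exp ⟪l, f x⟫ • (innerSL ℝ (f x)) v = _
  rw [innerSL_apply_apply, smul_eq_mul, real_inner_comm (f x) v]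

lemma inner_Ff (hf : Measurable f) (hB : ∀ x, ‖f x‖ ≤ B)
    (l v : EuclideanSpace ℝ (Fin L)) :
    ⟪v, Ff μ f l⟫ = ∫ x, Real.exp ⟪l, f x⟫ * ⟪v, f x⟫ ∂μ := by
  rw [Ff, ← integral_inner (int_exp_smul hf hB l hf.aestronglyMeasurable hB) v]
  refine integral_congr_ae (ae_of_all _ fun x => ?_)
  beta_reduce
  rw [real_inner_smul_right]

lemma inner_Fd (hf : Measurable f) (hB : ∀ x, ‖f x‖ ≤ B) (hB0 : 0 ≤ B)
    (l v : EuclideanSpace ℝ (Fin L)) :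
    ⟪v, Fd μ f l v⟫ = ∫ x, Real.exp ⟪l, f x⟫ * ⟪v, f x⟫ ^ 2 ∂μ := by
  rw [Fd_apply hf hB hB0 l v]
  have hint : Integrable (fun x => (Real.exp ⟪l, f x⟫ * ⟪v, f x⟫) • f x) μ := by
    have hg : AEStronglyMeasurable (fun x => ⟪v, f x⟫ • f x) μ := by
      have hc : Continuous fun y : EuclideanSpace ℝ (Fin L) => ⟪v, y⟫ • y :=
        ((continuous_const (y := v)).inner (𝕜 := ℝ) continuous_id).smul continuous_id
      exact hc.comp_aestronglyMeasurable hf.aestronglyMeasurable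
    have hC : ∀ x, ‖⟪v, f x⟫ • f x‖ ≤ ‖v‖ * B * B := fun x => by
      rw [norm_smul, Real.norm_eq_abs]
      exact mul_le_mul (inner_le hB v x) (hB x) (norm_nonneg _)
        (mul_nonneg (norm_nonneg _) hB0)
    have := int_exp_smul hf hB l hg hC
    refine this.congr (ae_of_all _ fun x => ?_)
    beta_reduce
    rw [smul_smul]
  rw [← integral_inner hint v]
  refine integral_congr_ae (ae_of_all _ fun x => ?_)
  beta_reduce
  rw [real_inner_smul_right]
  ring

lemma inner_Hf (hf : Measurable f) (hB : ∀ x, ‖f x‖ ≤ B) (hB0 : 0 ≤ B)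
    (l v : EuclideanSpace ℝ (Fin L)) :
    ⟪v, Hf μ f l v⟫ = (Zf μ f l)⁻¹ * (∫ x, Real.exp ⟪l, f x⟫ * ⟪v, f x⟫ ^ 2 ∂μ)
      - ((Zf μ f l) ^ 2)⁻¹ * (∫ x, Real.exp ⟪l, f x⟫ * ⟪v, f x⟫ ∂μ) ^ 2 := by
  rw [Hf]
  rw [ContinuousLinearMap.add_apply, ContinuousLinearMap.smul_apply,
    ContinuousLinearMap.smulRight_apply, ContinuousLinearMap.smul_apply]
  rw [inner_add_right, real_inner_smul_right, real_inner_smul_right]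
  rw [inner_Fd hf hB hB0 l v, inner_Ff hf hB l v, Zd_apply hf hB l v]
  simp only [smul_eq_mul]
  ring

lemma inner_Hf_pos (hf : Measurable f) (hB : ∀ x, ‖f x‖ ≤ B) (hB0 : 0 ≤ B)
    (hindep : ∀ (l0 : ℝ) (l : EuclideanSpace ℝ (Fin L)),
      (l0, l) ≠ (0, 0) → μ {x | l0 + ⟪l, f x⟫ = 0} = 0)
    (l : EuclideanSpace ℝ (Fin L)) {v : EuclideanSpace ℝ (Fin L)} (hv : v ≠ 0) :
    0 < ⟪v, Hf μ f l v⟫ := by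
  rw [inner_Hf hf hB hB0 l v]
  have hWpos : 0 < Zf μ f l := Zf_pos (μ := μ) hf hB l
  set W := Zf μ f l with hW
  have hg : AEStronglyMeasurable (fun x => ⟪v, f x⟫) μ := (meas_inner hf v).aestronglyMeasurable
  have hgb : ∀ x, ‖⟪v, f x⟫‖ ≤ ‖v‖ * B := fun x => by
    rw [Real.norm_eq_abs]; exact inner_le hB v x
  have Iw : Integrable (fun x => Real.exp ⟪l, f x⟫) μ := int_exp hf hB l
  have Iwg : Integrable (fun x => Real.exp ⟪l, f x⟫ * ⟪v, f x⟫) μ := by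
    simpa [smul_eq_mul] using int_exp_smul (μ := μ) hf hB l hg hgb
  have Iwg2 : Integrable (fun x => Real.exp ⟪l, f x⟫ * ⟪v, f x⟫ ^ 2) μ := by
    have h2 : AEStronglyMeasurable (fun x => ⟪v, f x⟫ ^ 2) μ := by
      simpa [sq, Pi.mul_def] using hg.mul hg
    have hb2 : ∀ x, ‖⟪v, f x⟫ ^ 2‖ ≤ (‖v‖ * B) ^ 2 := fun x => by
      rw [Real.norm_eq_abs, abs_of_nonneg (sq_nonneg _), ← sq_abs]
      exact pow_le_pow_left₀ (abs_nonneg _) (inner_le hB v x) 2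
    simpa [smul_eq_mul] using int_exp_smul (μ := μ) hf hB l h2 hb2
  set c := W⁻¹ * ∫ x, Real.exp ⟪l, f x⟫ * ⟪v, f x⟫ ∂μ with hc
  have Iwgc : Integrable (fun x => Real.exp ⟪l, f x⟫ * (⟪v, f x⟫ - c) ^ 2) μ := by
    have h2 : AEStronglyMeasurable (fun x => (⟪v, f x⟫ - c) ^ 2) μ := by
      have hgc : AEStronglyMeasurable (fun x => ⟪v, f x⟫ - c) μ :=
        hg.sub aestronglyMeasurable_const
      simpa [sq, Pi.mul_def] using hgc.mul hgc
    have hb2 : ∀ x, ‖(⟪v, f x⟫ - c) ^ 2‖ ≤ (‖v‖ * B + |c|) ^ 2 := fun x => by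
      rw [Real.norm_eq_abs, abs_of_nonneg (sq_nonneg _), ← sq_abs]
      have h1 : |⟪v, f x⟫ - c| ≤ ‖v‖ * B + |c| := by
        have h4 := abs_le.1 (inner_le hB v x)
        have h5 := le_abs_self c
        have h6 := neg_abs_le c
        exact abs_le.2 ⟨by linarith, by linarith⟩
      exact pow_le_pow_left₀ (abs_nonneg _) h1 2
    simpa [smul_eq_mul] using int_exp_smul (μ := μ) hf hB l h2 hb2
  have key : ∫ x, Real.exp ⟪l, f x⟫ * (⟪v, f x⟫ - c) ^ 2 ∂μ
      = (∫ x, Real.exp ⟪l, f x⟫ * ⟪v, f x⟫ ^ 2 ∂μ)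
        - 2 * c * (∫ x, Real.exp ⟪l, f x⟫ * ⟪v, f x⟫ ∂μ) + c ^ 2 * W := by
    have he : (fun x => Real.exp ⟪l, f x⟫ * (⟪v, f x⟫ - c) ^ 2)
        = fun x => (Real.exp ⟪l, f x⟫ * ⟪v, f x⟫ ^ 2
            - 2 * c * (Real.exp ⟪l, f x⟫ * ⟪v, f x⟫)) + c ^ 2 * Real.exp ⟪l, f x⟫ :=
      funext fun x => by ring
    have h1 : Integrable (fun x => Real.exp ⟪l, f x⟫ * ⟪v, f x⟫ ^ 2
        - 2 * c * (Real.exp ⟪l, f x⟫ * ⟪v, f x⟫)) μ := Iwg2.sub (Iwg.const_mul _)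
    have h2 : Integrable (fun x => c ^ 2 * Real.exp ⟪l, f x⟫) μ := Iw.const_mul _
    rw [he, integral_add h1 h2, integral_sub Iwg2 (Iwg.const_mul (2 * c)),
      integral_const_mul, integral_const_mul]
    rfl
  have hpos : 0 < ∫ x, Real.exp ⟪l, f x⟫ * (⟪v, f x⟫ - c) ^ 2 ∂μ := by
    rw [integral_pos_iff_support_of_nonneg
      (fun x => mul_nonneg (Real.exp_pos _).le (sq_nonneg _)) Iwgc]
    by_contra h
    have h0 : μ (Function.support fun x => Real.exp ⟪l, f x⟫ * (⟪v, f x⟫ - c) ^ 2) = 0 := by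
      simpa [pos_iff_ne_zero] using h
    have hker : μ {x | -c + ⟪v, f x⟫ = 0} = 0 := by
      refine hindep (-c) v fun hpair => hv ?_
      exact congrArg Prod.snd hpair
    have hcover : (Set.univ : Set X)
        ⊆ (Function.support fun x => Real.exp ⟪l, f x⟫ * (⟪v, f x⟫ - c) ^ 2)
          ∪ {x | -c + ⟪v, f x⟫ = 0} := by
      intro x _
      by_cases hx : ⟪v, f x⟫ = c
      · right
        simp only [Set.mem_setOf_eq, hx]
        ring
      · left
        exact mul_ne_zero (Real.exp_pos _).ne' (pow_ne_zero _ (sub_ne_zero.2 hx))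
    have hcontr : (1 : ℝ≥0∞) ≤ 0 := by
      calc (1:ℝ≥0∞) = μ Set.univ := (measure_univ (μ := μ)).symm
      _ ≤ μ ((Function.support fun x => Real.exp ⟪l, f x⟫ * (⟪v, f x⟫ - c) ^ 2)
          ∪ {x | -c + ⟪v, f x⟫ = 0}) := measure_mono hcover
      _ ≤ μ (Function.support fun x => Real.exp ⟪l, f x⟫ * (⟪v, f x⟫ - c) ^ 2)
          + μ {x | -c + ⟪v, f x⟫ = 0} := measure_union_le _ _
      _ = 0 := by rw [h0, hker, add_zero]
    simp at hcontr
  have hsplit : W⁻¹ * (∫ x, Real.exp ⟪l, f x⟫ * ⟪v, f x⟫ ^ 2 ∂μ)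
      - (W ^ 2)⁻¹ * (∫ x, Real.exp ⟪l, f x⟫ * ⟪v, f x⟫ ∂μ) ^ 2
      = W⁻¹ * (∫ x, Real.exp ⟪l, f x⟫ * (⟪v, f x⟫ - c) ^ 2 ∂μ) := by
    rw [key, hc]
    field_simp
    ring
  rw [hsplit]
  exact mul_pos (inv_pos.2 hWpos) hpos

lemma inj_of_posdef {G : EuclideanSpace ℝ (Fin L) → EuclideanSpace ℝ (Fin L)}
    {H : EuclideanSpace ℝ (Fin L) → EuclideanSpace ℝ (Fin L) →L[ℝ] EuclideanSpace ℝ (Fin L)}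
    (hHG : ∀ l, HasFDerivAt G (H l) l)
    (hpos : ∀ l (v : EuclideanSpace ℝ (Fin L)), v ≠ 0 → 0 < ⟪v, H l v⟫) :
    Function.Injective G := by
  intro l1 l2 he
  by_contra hne
  have hv : l1 - l2 ≠ 0 := sub_ne_zero.2 hne
  set v := l1 - l2 with hvdef
  have hφ : ∀ t : ℝ, HasDerivAt (fun t : ℝ => ⟪v, G (l2 + t • v)⟫)
      ⟪v, H (l2 + t • v) v⟫ t := by
    intro t
    have hline : HasDerivAt (fun t : ℝ => l2 + t • v) v t := by
      simpa using ((hasDerivAt_id t).smul_const v).const_add l2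
    have h2 : HasDerivAt (fun t : ℝ => G (l2 + t • v)) (H (l2 + t • v) v) t :=
      (hHG (l2 + t • v)).comp_hasDerivAt t hline
    simpa [Function.comp_def] using ((innerSL ℝ v).hasFDerivAt.comp_hasDerivAt t h2)
  have hmono : StrictMono fun t : ℝ => ⟪v, G (l2 + t • v)⟫ :=
    strictMono_of_deriv_pos fun t => by
      rw [(hφ t).deriv]; exact hpos _ _ hv
  have h01 : ⟪v, G (l2 + (0:ℝ) • v)⟫ < ⟪v, G (l2 + (1:ℝ) • v)⟫ := hmono zero_lt_one
  have e0 : l2 + (0:ℝ) • v = l2 := by simp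
  have e1 : l2 + (1:ℝ) • v = l1 := by simp [hvdef]
  rw [e0, e1, he] at h01
  exact lt_irrefl _ h01

lemma G_eq (hf : Measurable f) (hB : ∀ x, ‖f x‖ ≤ B)
    {A : EuclideanSpace ℝ (Fin L) → ℝ}
    (hA : ∀ l, A l = Real.log (∫ x, Real.exp ⟪l, f x⟫ ∂μ))
    {G : EuclideanSpace ℝ (Fin L) → EuclideanSpace ℝ (Fin L)}
    (hG : ∀ l, G l = ∫ x, f x
       ∂(μ.withDensity (fun x => ENNReal.ofReal (Real.exp (⟪l, f x⟫ - A l)))))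
    (l : EuclideanSpace ℝ (Fin L)) : G l = (Zf μ f l)⁻¹ • Ff μ f l := by
  rw [hG l]
  have hd : Measurable fun x => Real.toNNReal (Real.exp (⟪l, f x⟫ - A l)) :=
    (Real.measurable_exp.comp ((meas_inner hf l).sub measurable_const)).real_toNNReal
  have hrw : (fun x => ENNReal.ofReal (Real.exp (⟪l, f x⟫ - A l)))
      = fun x => ((Real.toNNReal (Real.exp (⟪l, f x⟫ - A l)) : ℝ≥0) : ℝ≥0∞) := rfl
  rw [hrw, integral_withDensity_eq_integral_smul hd]
  have hptw : ∀ x, (Real.toNNReal (Real.exp (⟪l, f x⟫ - A l))) • f x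
      = (Zf μ f l)⁻¹ • (Real.exp ⟪l, f x⟫ • f x) := fun x => by
    rw [NNReal.smul_def, Real.coe_toNNReal _ (Real.exp_nonneg _), Real.exp_sub, hA l, smul_smul]
    congr 1
    rw [Real.exp_log (Z_pos hf hB l), div_eq_inv_mul]
    rfl
  rw [integral_congr_ae (ae_of_all _ hptw), integral_smul]
  rfl

end Lag12

/-- If {1, f_1, …, f_L} is linearly independent modulo μ and
λ̂ : U → ℝ^L solves the Lagrange-multiplier equation ∫ f dE(λ̂(m), μ) = m on an open
set U, then λ̂ is differentiable on U and its derivative at m is the inverse of the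
Hessian of A(·, μ) at λ̂(m), i.e. the inverse of the derivative of the moment map
G(λ) = ∫ f dE(λ, μ) (the covariance matrix of f under E(λ̂(m), μ)). -/
theorem lagrange_multiplier_differentiable
    {X : Type*} [MeasurableSpace X] {L : ℕ} (hL : 0 < L)
    (μ : Measure X) [IsProbabilityMeasure μ]
    (f : X → EuclideanSpace ℝ (Fin L)) (hf_meas : Measurable f)
    (B : ℝ) (hf_bdd : ∀ x, ‖f x‖ ≤ B)
    (hindep : ∀ (l0 : ℝ) (l : EuclideanSpace ℝ (Fin L)),
      (l0, l) ≠ (0, 0) → μ {x | l0 + ⟪l, f x⟫ = 0} = 0)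
    (A : EuclideanSpace ℝ (Fin L) → ℝ)
    (hA : ∀ l, A l = Real.log (∫ x, Real.exp ⟪l, f x⟫ ∂μ))
    (G : EuclideanSpace ℝ (Fin L) → EuclideanSpace ℝ (Fin L))
    (hG : ∀ l, G l = ∫ x, f x
       ∂(μ.withDensity (fun x => ENNReal.ofReal (Real.exp (⟪l, f x⟫ - A l)))))
    (U : Set (EuclideanSpace ℝ (Fin L))) (hU : IsOpen U)
    (lam : EuclideanSpace ℝ (Fin L) → EuclideanSpace ℝ (Fin L))
    (hlam : ∀ m ∈ U, G (lam m) = m) :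
    ∀ m ∈ U, ∃ D : EuclideanSpace ℝ (Fin L) →L[ℝ] EuclideanSpace ℝ (Fin L),
      HasFDerivAt lam D m ∧
      D.comp (fderiv ℝ G (lam m)) = ContinuousLinearMap.id ℝ (EuclideanSpace ℝ (Fin L)) ∧
      (fderiv ℝ G (lam m)).comp D = ContinuousLinearMap.id ℝ (EuclideanSpace ℝ (Fin L)) := by
  classical
  intro m hm
  have hX : Nonempty X := by
    by_contra h
    rw [not_nonempty_iff] at h
    have h1 : μ Set.univ = 1 := measure_univ
    rw [Set.univ_eq_empty_iff.2 h, measure_empty] at h1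
    exact zero_ne_one h1
  have hB0 : 0 ≤ B := le_trans (norm_nonneg (f (Classical.arbitrary X))) (hf_bdd _)
  have hGeq : ∀ l, G l = (Lag12.Zf μ f l)⁻¹ • Lag12.Ff μ f l :=
    Lag12.G_eq hf_meas hf_bdd hA hG
  have hHG : ∀ l, HasFDerivAt G (Lag12.Hf μ f l) l :=
    fun l => Lag12.hasFDerivAt_G' hf_meas hf_bdd hB0 hGeq l
  have hposdef : ∀ l (v : EuclideanSpace ℝ (Fin L)), v ≠ 0 → 0 < ⟪v, Lag12.Hf μ f l v⟫ :=
    fun l v hv => Lag12.inner_Hf_pos hf_meas hf_bdd hB0 hindep l hv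
  have hinj : Function.Injective G := Lag12.inj_of_posdef hHG hposdef
  set a := lam m with ha
  have hlin : Function.Injective (Lag12.Hf μ f a) := by
    intro v w hvw
    by_contra hne
    have hsub : Lag12.Hf μ f a (v - w) = 0 := by rw [map_sub, hvw, sub_self]
    have h1 := hposdef a (v - w) (sub_ne_zero.2 hne)
    rw [hsub, inner_zero_right] at h1
    exact lt_irrefl _ h1
  let Φ : EuclideanSpace ℝ (Fin L) ≃L[ℝ] EuclideanSpace ℝ (Fin L) :=
    (LinearEquiv.ofInjectiveEndo (Lag12.Hf μ f a).toLinearMap hlin).toContinuousLinearEquiv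
  have hcoe : (Φ : EuclideanSpace ℝ (Fin L) →L[ℝ] EuclideanSpace ℝ (Fin L))
      = Lag12.Hf μ f a := by
    ext v
    rfl
  have hZpos := Lag12.Zf_pos (μ := μ) hf_meas hf_bdd a
  have hcZ : ContinuousAt (Lag12.Zf μ f) a :=
    (Lag12.hasFDerivAt_Zf hf_meas hf_bdd hB0 a).continuousAt
  have hcF : ContinuousAt (Lag12.Ff μ f) a :=
    (Lag12.hasFDerivAt_Ff hf_meas hf_bdd hB0 a).continuousAt
  have hcZd : ContinuousAt (Lag12.Zd μ f) a := Lag12.continuousAt_Zd hf_meas hf_bdd hB0 a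
  have hcFd : ContinuousAt (Lag12.Fd μ f) a := Lag12.continuousAt_Fd hf_meas hf_bdd hB0 a
  have hcH : ContinuousAt (Lag12.Hf μ f) a := by
    show ContinuousAt (fun l => (Lag12.Zf μ f l)⁻¹ • Lag12.Fd μ f l
      + ((-((Lag12.Zf μ f l) ^ 2)⁻¹) • Lag12.Zd μ f l).smulRight (Lag12.Ff μ f l)) a
    refine ContinuousAt.add ((hcZ.inv₀ hZpos.ne').smul hcFd) ?_
    have hc1 : ContinuousAt (fun l => (-((Lag12.Zf μ f l) ^ 2)⁻¹) • Lag12.Zd μ f l) a :=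
      (((hcZ.pow 2).inv₀ (pow_ne_zero _ hZpos.ne')).neg).smul hcZd
    exact (isBoundedBilinearMap_smulRight.continuous.continuousAt).comp (hc1.prodMk hcF)
  have hstrict : HasStrictFDerivAt G
      (Φ : EuclideanSpace ℝ (Fin L) →L[ℝ] EuclideanSpace ℝ (Fin L)) a := by
    rw [hcoe]
    exact hasStrictFDerivAt_of_hasFDerivAt_of_continuousAt (Eventually.of_forall hHG) hcH
  have hGa : G a = m := hlam m hm
  have hinvd : HasStrictFDerivAt (hstrict.localInverse G Φ a)
      ((Φ.symm : EuclideanSpace ℝ (Fin L) →L[ℝ] EuclideanSpace ℝ (Fin L))) (G a) :=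
    hstrict.to_localInverse
  have hev : ∀ᶠ y in 𝓝 m, G (hstrict.localInverse G Φ a y) = y := by
    rw [← hGa]
    exact hstrict.eventually_right_inverse
  have heq : lam =ᶠ[𝓝 m] hstrict.localInverse G Φ a := by
    filter_upwards [hev, hU.mem_nhds hm] with y hy hyU
    exact hinj (by rw [hlam y hyU, hy])
  refine ⟨(Φ.symm : EuclideanSpace ℝ (Fin L) →L[ℝ] EuclideanSpace ℝ (Fin L)), ?_, ?_, ?_⟩
  · have h2 := hinvd.hasFDerivAt
    rw [hGa] at h2
    exact h2.congr_of_eventuallyEq heq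
  · rw [(hHG (lam m)).fderiv, ← ha, ← hcoe]
    ext v
    simp
  · rw [(hHG (lam m)).fderiv, ← ha, ← hcoe]
    ext v
    simp
end

section
/- For every Λ > 0 there exists a constant C, depending only on Λ and ‖f‖_∞, such that for all λ_1, λ_2 ∈ ℝ^L with ‖λ_1‖ ≤ Λ and ‖λ_2‖ ≤ Λ and all probability measures μ_1, μ_2 on X, the corresponding exponential family members satisfy ‖E(λ_1, μ_1) − E(λ_2, μ_2)‖_TV ≤ C (‖λ_1 − λ_2‖ + ‖μ_1 − μ_2‖_TV). -/
set_option maxHeartbeats 1000000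
set_option linter.unusedSectionVars false

open MeasureTheory
open scoped RealInnerProductSpace NNReal ENNReal

lemma exp_sub_exp_le {a b M : ℝ} (ha : a ≤ M) (hb : b ≤ M) :
    |Real.exp a - Real.exp b| ≤ Real.exp M * |a - b| := by
  wlog hab : b ≤ a with H
  · rw [abs_sub_comm, abs_sub_comm a b]; exact H hb ha (le_of_not_ge hab)
  rw [abs_of_nonneg (sub_nonneg.2 (Real.exp_le_exp.2 hab)), abs_of_nonneg (sub_nonneg.2 hab)]
  have h1 : Real.exp a * Real.exp (b - a) = Real.exp b := by
    rw [← Real.exp_add]; ring_nf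
  have h2 : 1 + (b - a) ≤ Real.exp (b - a) := by
    have := Real.add_one_le_exp (b - a); linarith
  have h3 := Real.exp_pos a
  have h4 : Real.exp a ≤ Real.exp M := Real.exp_le_exp.2 ha
  nlinarith

lemma log_sub_log_le {a b c : ℝ} (hc : 0 < c) (ha : c ≤ a) (hb : c ≤ b) :
    |Real.log a - Real.log b| ≤ (1 / c) * |a - b| := by
  wlog hab : b ≤ a with H
  · rw [abs_sub_comm, abs_sub_comm a b]; exact H hc hb ha (le_of_not_ge hab)
  have ha0 : 0 < a := lt_of_lt_of_le hc ha
  have hb0 : 0 < b := lt_of_lt_of_le hc hb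
  rw [abs_of_nonneg (sub_nonneg.2 (Real.log_le_log hb0 hab)),
    abs_of_nonneg (sub_nonneg.2 hab)]
  have h1 : Real.log a - Real.log b = Real.log (a / b) := (Real.log_div ha0.ne' hb0.ne').symm
  have h2 : Real.log (a / b) ≤ a / b - 1 := Real.log_le_sub_one_of_pos (div_pos ha0 hb0)
  have h3 : a / b - 1 = (a - b) / b := by field_simp
  have h4 : (a - b) / b ≤ (a - b) / c := by
    apply div_le_div_of_nonneg_left (by linarith) hc hb
  rw [h1]
  calc Real.log (a/b) ≤ (a-b)/b := by linarith
    _ ≤ (a-b)/c := h4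
    _ = (1/c) * (a-b) := by ring

lemma tv_le_of_add_eq {X : Type*} [MeasurableSpace X]
    (ρ₁ ρ₂ σ₁ σ₂ : Measure X) [IsFiniteMeasure ρ₁] [IsFiniteMeasure ρ₂]
    [IsFiniteMeasure σ₁] [IsFiniteMeasure σ₂]
    (h : ρ₁ + σ₂ = ρ₂ + σ₁) :
    (ρ₁.toSignedMeasure - ρ₂.toSignedMeasure).totalVariation Set.univ
      ≤ σ₁ Set.univ + σ₂ Set.univ := by
  set s := ρ₁.toSignedMeasure - ρ₂.toSignedMeasure with hs
  have hsA : ∀ A : Set X, MeasurableSet A → s A = (σ₁ A).toReal - (σ₂ A).toReal := by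
    intro A hA
    have h1 : ρ₁ A + σ₂ A = ρ₂ A + σ₁ A := by
      rw [← Measure.add_apply, ← Measure.add_apply, h]
    have h2 : (ρ₁ A).toReal + (σ₂ A).toReal = (ρ₂ A).toReal + (σ₁ A).toReal := by
      rw [← ENNReal.toReal_add (measure_ne_top _ _) (measure_ne_top _ _),
          ← ENNReal.toReal_add (measure_ne_top _ _) (measure_ne_top _ _), h1]
    rw [hs, Measure.toSignedMeasure_sub_apply hA, measureReal_def, measureReal_def]; linarith
  obtain ⟨i, hi₁, hi₂, hi₃, hpos, hneg⟩ := s.toJordanDecomposition_spec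
  rw [MeasureTheory.SignedMeasure.totalVariation, Measure.add_apply, hpos, hneg,
    SignedMeasure.toMeasureOfZeroLE_apply _ hi₂ hi₁ MeasurableSet.univ,
    SignedMeasure.toMeasureOfLEZero_apply _ hi₃ hi₁.compl MeasurableSet.univ]
  have key1 : s (i ∩ Set.univ) ≤ (σ₁ Set.univ).toReal := by
    rw [hsA _ (hi₁.inter MeasurableSet.univ)]
    have := ENNReal.toReal_mono (measure_ne_top σ₁ _)
      (measure_mono (Set.subset_univ (i ∩ Set.univ)))
    have := ENNReal.toReal_nonneg (a := σ₂ (i ∩ Set.univ))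
    linarith
  have key2 : -s (iᶜ ∩ Set.univ) ≤ (σ₂ Set.univ).toReal := by
    rw [hsA _ (hi₁.compl.inter MeasurableSet.univ)]
    have := ENNReal.toReal_mono (measure_ne_top σ₂ _)
      (measure_mono (Set.subset_univ (iᶜ ∩ Set.univ)))
    have := ENNReal.toReal_nonneg (a := σ₁ (iᶜ ∩ Set.univ))
    linarith
  have hgen : ∀ (x : ℝ≥0) (m : ℝ≥0∞), m ≠ ⊤ → (x : ℝ) ≤ m.toReal → (x : ℝ≥0∞) ≤ m := by
    intro x m hm hx
    rw [← ENNReal.ofReal_toReal hm]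
    exact (ENNReal.le_ofReal_iff_toReal_le ENNReal.coe_ne_top ENNReal.toReal_nonneg).2
      (by simpa using hx)
  exact add_le_add (hgen _ _ (measure_ne_top _ _) (by simpa using key1))
    (hgen _ _ (measure_ne_top _ _) (by simpa using key2))

lemma jordan_add_eq {X : Type*} [MeasurableSpace X] (μ₁ μ₂ : Measure X)
    [IsFiniteMeasure μ₁] [IsFiniteMeasure μ₂] :
    μ₁ + (μ₁.toSignedMeasure - μ₂.toSignedMeasure).toJordanDecomposition.negPart
      = μ₂ + (μ₁.toSignedMeasure - μ₂.toSignedMeasure).toJordanDecomposition.posPart := by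
  set s := μ₁.toSignedMeasure - μ₂.toSignedMeasure with hs
  set p := s.toJordanDecomposition.posPart
  set n := s.toJordanDecomposition.negPart
  have hj := s.toSignedMeasure_toJordanDecomposition
  ext A hA
  have h1 : s.toJordanDecomposition.toSignedMeasure A = s A := by rw [hj]
  rw [JordanDecomposition.toSignedMeasure, Measure.toSignedMeasure_sub_apply hA] at h1
  rw [hs, Measure.toSignedMeasure_sub_apply hA] at h1
  have h2 : (μ₁ A).toReal + (n A).toReal = (μ₂ A).toReal + (p A).toReal := by
    simp only [measureReal_def] at h1; linarith
  rw [Measure.add_apply, Measure.add_apply]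
  rw [← ENNReal.toReal_add (measure_ne_top _ _) (measure_ne_top _ _)] at h2
  rw [← ENNReal.toReal_add (measure_ne_top _ _) (measure_ne_top _ _)] at h2
  exact (ENNReal.toReal_eq_toReal_iff'
    (by exact ENNReal.add_ne_top.2 ⟨measure_ne_top _ _, measure_ne_top _ _⟩)
    (by exact ENNReal.add_ne_top.2 ⟨measure_ne_top _ _, measure_ne_top _ _⟩)).1 h2

section helpers

variable {X : Type*} [MeasurableSpace X] {L : ℕ}
  {f : X → EuclideanSpace ℝ (Fin L)} {B Λ : ℝ} {l : EuclideanSpace ℝ (Fin L)}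

lemma inner_f_abs_le (hf_bdd : ∀ x, ‖f x‖ ≤ B) (l : EuclideanSpace ℝ (Fin L)) (x : X) :
    |⟪l, f x⟫| ≤ ‖l‖ * B := by
  calc |⟪l, f x⟫| ≤ ‖l‖ * ‖f x‖ := abs_real_inner_le_norm l (f x)
    _ ≤ ‖l‖ * B := by
        have h1 := hf_bdd x
        have h0 : (0:ℝ) ≤ ‖l‖ := norm_nonneg l
        nlinarith

lemma measurable_exp_inner (hf_meas : Measurable f) (l : EuclideanSpace ℝ (Fin L)) :
    Measurable fun y => Real.exp ⟪l, f y⟫ :=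
  Real.measurable_exp.comp (measurable_const.inner hf_meas)

lemma integrable_exp_inner (hf_meas : Measurable f) (hf_bdd : ∀ x, ‖f x‖ ≤ B)
    (l : EuclideanSpace ℝ (Fin L)) (μ : Measure X) [IsFiniteMeasure μ] :
    Integrable (fun y => Real.exp ⟪l, f y⟫) μ := by
  refine (integrable_const (Real.exp (‖l‖ * B))).mono'
    (measurable_exp_inner hf_meas l).aestronglyMeasurable (ae_of_all _ fun x => ?_)
  rw [Real.norm_eq_abs, abs_of_pos (Real.exp_pos _)]
  exact Real.exp_le_exp.2 (le_trans (le_abs_self _) (inner_f_abs_le hf_bdd l x))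

lemma Z_mem (hf_meas : Measurable f) (hB : 0 ≤ B) (hf_bdd : ∀ x, ‖f x‖ ≤ B)
    (hl : ‖l‖ ≤ Λ) (μ : Measure X) [IsProbabilityMeasure μ] :
    Real.exp (-(Λ * B)) ≤ ∫ y, Real.exp ⟪l, f y⟫ ∂μ ∧
      (∫ y, Real.exp ⟪l, f y⟫ ∂μ) ≤ Real.exp (Λ * B) := by
  have hpt : ∀ x, |⟪l, f x⟫| ≤ Λ * B := fun x =>
    le_trans (inner_f_abs_le hf_bdd l x) (mul_le_mul_of_nonneg_right hl hB)
  constructor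
  · have h := integral_mono (μ := μ) (integrable_const (Real.exp (-(Λ * B))))
      (integrable_exp_inner hf_meas hf_bdd l μ) (fun x => Real.exp_le_exp.2 (by
        have := (abs_le.1 (hpt x)).1; linarith))
    simpa using h
  · have h := integral_mono (μ := μ) (integrable_exp_inner hf_meas hf_bdd l μ)
      (integrable_const (Real.exp (Λ * B))) (fun x => Real.exp_le_exp.2 (by
        have := (abs_le.1 (hpt x)).2; linarith))
    simpa using h

end helpers

/-- For every Λ > 0 there is a constant C (depending only on Λ and the
bound ‖f‖_∞ on f) such that for ‖λᵢ‖ ≤ Λ and probability measures μ₁, μ₂, the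
exponential family members ν_i = E(λ_i, μ_i) = μ_i.withDensity (exp(⟪λ_i, f⟫ − A(λ_i, μ_i)))
satisfy ‖ν₁ − ν₂‖_TV ≤ C (‖λ₁ − λ₂‖ + ‖μ₁ − μ₂‖_TV), with ‖μ − ν‖_TV = |μ − ν|(X). -/
theorem expFamily_lipschitz
    {X : Type*} [MeasurableSpace X] {L : ℕ} (hL : 0 < L)
    (f : X → EuclideanSpace ℝ (Fin L)) (hf_meas : Measurable f)
    (B : ℝ) (hB : 0 ≤ B) (hf_bdd : ∀ x, ‖f x‖ ≤ B)
    (Λ : ℝ) (hΛ : 0 < Λ) :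
    ∃ C : ℝ, 0 < C ∧
      ∀ (l₁ l₂ : EuclideanSpace ℝ (Fin L)), ‖l₁‖ ≤ Λ → ‖l₂‖ ≤ Λ →
      ∀ (μ₁ μ₂ : Measure X), ∀ (_ : IsProbabilityMeasure μ₁) (_ : IsProbabilityMeasure μ₂),
      ∀ (ν₁ ν₂ : Measure X), ∀ (_ : IsFiniteMeasure ν₁) (_ : IsFiniteMeasure ν₂),
        ν₁ = μ₁.withDensity (fun x => ENNReal.ofReal (Real.exp
              (⟪l₁, f x⟫ - Real.log (∫ y, Real.exp ⟪l₁, f y⟫ ∂μ₁)))) →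
        ν₂ = μ₂.withDensity (fun x => ENNReal.ofReal (Real.exp
              (⟪l₂, f x⟫ - Real.log (∫ y, Real.exp ⟪l₂, f y⟫ ∂μ₂)))) →
        ((ν₁.toSignedMeasure - ν₂.toSignedMeasure).totalVariation Set.univ).toReal
          ≤ C * (‖l₁ - l₂‖ +
              ((μ₁.toSignedMeasure - μ₂.toSignedMeasure).totalVariation Set.univ).toReal) := by
  classical
  refine ⟨4 * Real.exp (4 * Λ * B) * (B + 1), by positivity, ?_⟩
  intro l₁ l₂ hl₁ hl₂ μ₁ μ₂ hμ₁ hμ₂ ν₁ ν₂ hν₁fin hν₂fin hν₁def hν₂def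
  have hΛ0 : 0 ≤ Λ := hΛ.le
  set Z₁ := ∫ y, Real.exp ⟪l₁, f y⟫ ∂μ₁ with hZ₁def
  set Z₂ := ∫ y, Real.exp ⟪l₂, f y⟫ ∂μ₂ with hZ₂def
  set A₁ := Real.log Z₁ with hA₁def
  set A₂ := Real.log Z₂ with hA₂def
  obtain ⟨hZ₁lo, hZ₁hi⟩ := Z_mem hf_meas hB hf_bdd hl₁ μ₁
  obtain ⟨hZ₂lo, hZ₂hi⟩ := Z_mem hf_meas hB hf_bdd hl₂ μ₂
  have hexpLB : (0:ℝ) < Real.exp (-(Λ * B)) := Real.exp_pos _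
  have hA₁b : |A₁| ≤ Λ * B := by
    rw [abs_le]
    constructor
    · calc -(Λ*B) = Real.log (Real.exp (-(Λ*B))) := (Real.log_exp _).symm
        _ ≤ A₁ := Real.log_le_log hexpLB hZ₁lo
    · calc A₁ ≤ Real.log (Real.exp (Λ*B)) :=
          Real.log_le_log (lt_of_lt_of_le hexpLB hZ₁lo) hZ₁hi
        _ = Λ*B := Real.log_exp _
  have hA₂b : |A₂| ≤ Λ * B := by
    rw [abs_le]
    constructor
    · calc -(Λ*B) = Real.log (Real.exp (-(Λ*B))) := (Real.log_exp _).symm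
        _ ≤ A₂ := Real.log_le_log hexpLB hZ₂lo
    · calc A₂ ≤ Real.log (Real.exp (Λ*B)) :=
          Real.log_le_log (lt_of_lt_of_le hexpLB hZ₂lo) hZ₂hi
        _ = Λ*B := Real.log_exp _
  set TVμ := ((μ₁.toSignedMeasure - μ₂.toSignedMeasure).totalVariation Set.univ).toReal
    with hTVμdef
  have hTVμ0 : 0 ≤ TVμ := ENNReal.toReal_nonneg
  set p := (μ₁.toSignedMeasure - μ₂.toSignedMeasure).toJordanDecomposition.posPart with hpdef
  set n := (μ₁.toSignedMeasure - μ₂.toSignedMeasure).toJordanDecomposition.negPart with hndef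
  have hpn : μ₁ + n = μ₂ + p := jordan_add_eq μ₁ μ₂
  have hTVμ : TVμ = (p Set.univ).toReal + (n Set.univ).toReal := by
    rw [hTVμdef, MeasureTheory.SignedMeasure.totalVariation, Measure.add_apply,
      ENNReal.toReal_add (measure_ne_top _ _) (measure_ne_top _ _)]
  -- bound |Z₁ - Z₂|
  have hZdiff : |Z₁ - Z₂| ≤ Real.exp (Λ*B) * B * ‖l₁ - l₂‖ + Real.exp (Λ*B) * TVμ := by
    have hint1 : Integrable (fun y => Real.exp ⟪l₁, f y⟫) μ₁ :=
      integrable_exp_inner hf_meas hf_bdd l₁ μ₁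
    have hint2 : Integrable (fun y => Real.exp ⟪l₂, f y⟫) μ₁ :=
      integrable_exp_inner hf_meas hf_bdd l₂ μ₁
    set W := ∫ y, Real.exp ⟪l₂, f y⟫ ∂μ₁ with hWdef
    have step1 : |Z₁ - W| ≤ Real.exp (Λ*B) * B * ‖l₁ - l₂‖ := by
      rw [hZ₁def, hWdef, ← integral_sub hint1 hint2]
      have hbd : ∀ x, ‖Real.exp ⟪l₁, f x⟫ - Real.exp ⟪l₂, f x⟫‖
          ≤ Real.exp (Λ*B) * B * ‖l₁ - l₂‖ := by
        intro x
        rw [Real.norm_eq_abs]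
        have h1 := inner_f_abs_le hf_bdd l₁ x
        have h2 := inner_f_abs_le hf_bdd l₂ x
        have hl₁' : ‖l₁‖ * B ≤ Λ * B := mul_le_mul_of_nonneg_right hl₁ hB
        have hl₂' : ‖l₂‖ * B ≤ Λ * B := mul_le_mul_of_nonneg_right hl₂ hB
        refine le_trans (exp_sub_exp_le (M := Λ*B) (by
            have := (abs_le.1 h1).2; linarith) (by
            have := (abs_le.1 h2).2; linarith)) ?_
        rw [mul_assoc]
        refine mul_le_mul_of_nonneg_left ?_ (Real.exp_pos _).le
        have hsub : ⟪l₁, f x⟫ - ⟪l₂, f x⟫ = ⟪l₁ - l₂, f x⟫ := (inner_sub_left _ _ _).symm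
        rw [hsub]
        calc |⟪l₁ - l₂, f x⟫| ≤ ‖l₁ - l₂‖ * B := inner_f_abs_le hf_bdd _ x
          _ = B * ‖l₁ - l₂‖ := mul_comm _ _
      have := norm_integral_le_of_norm_le_const (μ := μ₁) (ae_of_all _ hbd)
      simpa using this
    have step2 : |W - Z₂| ≤ Real.exp (Λ*B) * TVμ := by
      have hint2' : Integrable (fun y => Real.exp ⟪l₂, f y⟫) μ₂ :=
        integrable_exp_inner hf_meas hf_bdd l₂ μ₂
      have hintp : Integrable (fun y => Real.exp ⟪l₂, f y⟫) p :=
        integrable_exp_inner hf_meas hf_bdd l₂ p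
      have hintn : Integrable (fun y => Real.exp ⟪l₂, f y⟫) n :=
        integrable_exp_inner hf_meas hf_bdd l₂ n
      have hsum : W + ∫ y, Real.exp ⟪l₂, f y⟫ ∂n
          = Z₂ + ∫ y, Real.exp ⟪l₂, f y⟫ ∂p := by
        rw [hWdef, hZ₂def, ← integral_add_measure hint2 hintn,
          ← integral_add_measure hint2' hintp, hpn]
      have hple0 : 0 ≤ ∫ y, Real.exp ⟪l₂, f y⟫ ∂p :=
        integral_nonneg fun x => (Real.exp_pos _).le
      have hnle0 : 0 ≤ ∫ y, Real.exp ⟪l₂, f y⟫ ∂n :=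
        integral_nonneg fun x => (Real.exp_pos _).le
      have hple : (∫ y, Real.exp ⟪l₂, f y⟫ ∂p) ≤ Real.exp (Λ*B) * (p Set.univ).toReal := by
        have h := integral_mono hintp (integrable_const (Real.exp (Λ*B)))
          (fun x => Real.exp_le_exp.2 (by
            have h1 := inner_f_abs_le hf_bdd l₂ x
            have h2 : ‖l₂‖ * B ≤ Λ * B := mul_le_mul_of_nonneg_right hl₂ hB
            have := (abs_le.1 h1).2
            linarith))
        rw [integral_const, smul_eq_mul] at h
        rw [measureReal_def] at h
        linarith [h]
      have hnle : (∫ y, Real.exp ⟪l₂, f y⟫ ∂n) ≤ Real.exp (Λ*B) * (n Set.univ).toReal := by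
        have h := integral_mono hintn (integrable_const (Real.exp (Λ*B)))
          (fun x => Real.exp_le_exp.2 (by
            have h1 := inner_f_abs_le hf_bdd l₂ x
            have h2 : ‖l₂‖ * B ≤ Λ * B := mul_le_mul_of_nonneg_right hl₂ hB
            have := (abs_le.1 h1).2
            linarith))
        rw [integral_const, smul_eq_mul] at h
        rw [measureReal_def] at h
        linarith [h]
      have hexp0 : (0:ℝ) ≤ Real.exp (Λ*B) := (Real.exp_pos _).le
      rw [abs_le]
      constructor
      · have : Real.exp (Λ*B) * TVμ = Real.exp (Λ*B) * (p Set.univ).toReal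
            + Real.exp (Λ*B) * (n Set.univ).toReal := by rw [hTVμ]; ring
        nlinarith [hple, hnle, hple0, hnle0]
      · have : Real.exp (Λ*B) * TVμ = Real.exp (Λ*B) * (p Set.univ).toReal
            + Real.exp (Λ*B) * (n Set.univ).toReal := by rw [hTVμ]; ring
        nlinarith [hple, hnle, hple0, hnle0]
    calc |Z₁ - Z₂| ≤ |Z₁ - W| + |W - Z₂| := abs_sub_le _ _ _
      _ ≤ _ := add_le_add step1 step2
  have hAdiff : |A₁ - A₂| ≤ Real.exp (Λ*B) * |Z₁ - Z₂| := by
    have h := log_sub_log_le hexpLB hZ₁lo hZ₂lo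
    have h1 : 1 / Real.exp (-(Λ*B)) = Real.exp (Λ*B) := by
      rw [Real.exp_neg]; field_simp
    rwa [h1] at h
  -- measure part
  set G₁ : X → ℝ≥0∞ := fun x => ENNReal.ofReal (Real.exp (⟪l₁, f x⟫ - A₁)) with hG₁def
  set G₂ : X → ℝ≥0∞ := fun x => ENNReal.ofReal (Real.exp (⟪l₂, f x⟫ - A₂)) with hG₂def
  have hG₁m : Measurable G₁ := ENNReal.measurable_ofReal.comp
    (Real.measurable_exp.comp ((measurable_const.inner hf_meas).sub measurable_const))
  have hG₂m : Measurable G₂ := ENNReal.measurable_ofReal.comp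
    (Real.measurable_exp.comp ((measurable_const.inner hf_meas).sub measurable_const))
  set D₁ : X → ℝ≥0∞ := fun x => G₁ x - G₂ x with hD₁def
  set D₂ : X → ℝ≥0∞ := fun x => G₂ x - G₁ x with hD₂def
  have hD₁m : Measurable D₁ := hG₁m.sub hG₂m
  have hD₂m : Measurable D₂ := hG₂m.sub hG₁m
  set δ := Real.exp (2*Λ*B) * (B * ‖l₁ - l₂‖ + |A₁ - A₂|) with hδdef
  have hδ0 : 0 ≤ δ := by positivity
  have e2nn : (0:ℝ) ≤ Real.exp (2*Λ*B) := (Real.exp_pos _).le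
  have hgdiff : ∀ x, |Real.exp (⟪l₁, f x⟫ - A₁) - Real.exp (⟪l₂, f x⟫ - A₂)| ≤ δ := by
    intro x
    have h1 := abs_le.1 (inner_f_abs_le hf_bdd l₁ x)
    have h2 := abs_le.1 (inner_f_abs_le hf_bdd l₂ x)
    have hl₁' : ‖l₁‖ * B ≤ Λ * B := mul_le_mul_of_nonneg_right hl₁ hB
    have hl₂' : ‖l₂‖ * B ≤ Λ * B := mul_le_mul_of_nonneg_right hl₂ hB
    have hA1 := abs_le.1 hA₁b
    have hA2 := abs_le.1 hA₂b
    refine le_trans (exp_sub_exp_le (M := 2*Λ*B) (by linarith) (by linarith)) ?_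
    rw [hδdef]
    refine mul_le_mul_of_nonneg_left ?_ (Real.exp_pos _).le
    have hsub : (⟪l₁, f x⟫ - A₁) - (⟪l₂, f x⟫ - A₂) = ⟪l₁ - l₂, f x⟫ - (A₁ - A₂) := by
      rw [inner_sub_left]; ring
    rw [hsub]
    calc |⟪l₁ - l₂, f x⟫ - (A₁ - A₂)| ≤ |⟪l₁ - l₂, f x⟫| + |A₁ - A₂| := abs_sub _ _
      _ ≤ B * ‖l₁ - l₂‖ + |A₁ - A₂| := by
          have h := inner_f_abs_le hf_bdd (l₁ - l₂) x
          have hc : ‖l₁ - l₂‖ * B = B * ‖l₁ - l₂‖ := mul_comm _ _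
          linarith
  have hD₁le : ∀ x, D₁ x ≤ ENNReal.ofReal δ := by
    intro x
    show G₁ x - G₂ x ≤ _
    rw [hG₁def, hG₂def]
    simp only
    rw [← ENNReal.ofReal_sub _ (Real.exp_pos _).le]
    exact ENNReal.ofReal_le_ofReal (le_trans (le_abs_self _) (hgdiff x))
  have hD₂le : ∀ x, D₂ x ≤ ENNReal.ofReal δ := by
    intro x
    show G₂ x - G₁ x ≤ _
    rw [hG₁def, hG₂def]
    simp only
    rw [← ENNReal.ofReal_sub _ (Real.exp_pos _).le]
    refine ENNReal.ofReal_le_ofReal (le_trans (le_abs_self _) ?_)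
    rw [abs_sub_comm]
    exact hgdiff x
  have hG₂le : ∀ x, G₂ x ≤ ENNReal.ofReal (Real.exp (2*Λ*B)) := by
    intro x
    rw [hG₂def]
    simp only
    have h2 := abs_le.1 (inner_f_abs_le hf_bdd l₂ x)
    have hl₂' : ‖l₂‖ * B ≤ Λ * B := mul_le_mul_of_nonneg_right hl₂ hB
    have hA2 := abs_le.1 hA₂b
    exact ENNReal.ofReal_le_ofReal (Real.exp_le_exp.2 (by linarith))
  have hm1 : (μ₁.withDensity D₁) Set.univ ≤ ENNReal.ofReal δ := by
    rw [withDensity_apply _ MeasurableSet.univ, setLIntegral_univ]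
    calc ∫⁻ x, D₁ x ∂μ₁ ≤ ∫⁻ _, ENNReal.ofReal δ ∂μ₁ := lintegral_mono hD₁le
      _ = ENNReal.ofReal δ := by simp
  have hm2 : (μ₁.withDensity D₂) Set.univ ≤ ENNReal.ofReal δ := by
    rw [withDensity_apply _ MeasurableSet.univ, setLIntegral_univ]
    calc ∫⁻ x, D₂ x ∂μ₁ ≤ ∫⁻ _, ENNReal.ofReal δ ∂μ₁ := lintegral_mono hD₂le
      _ = ENNReal.ofReal δ := by simp
  have hmp : (p.withDensity G₂) Set.univ
      ≤ ENNReal.ofReal (Real.exp (2*Λ*B)) * p Set.univ := by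
    rw [withDensity_apply _ MeasurableSet.univ, setLIntegral_univ]
    calc ∫⁻ x, G₂ x ∂p ≤ ∫⁻ _, ENNReal.ofReal (Real.exp (2*Λ*B)) ∂p :=
          lintegral_mono hG₂le
      _ = _ := lintegral_const _
  have hmn : (n.withDensity G₂) Set.univ
      ≤ ENNReal.ofReal (Real.exp (2*Λ*B)) * n Set.univ := by
    rw [withDensity_apply _ MeasurableSet.univ, setLIntegral_univ]
    calc ∫⁻ x, G₂ x ∂n ≤ ∫⁻ _, ENNReal.ofReal (Real.exp (2*Λ*B)) ∂n :=
          lintegral_mono hG₂le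
      _ = _ := lintegral_const _
  haveI hf1 : IsFiniteMeasure (μ₁.withDensity D₁) :=
    ⟨lt_of_le_of_lt hm1 ENNReal.ofReal_lt_top⟩
  haveI hf2 : IsFiniteMeasure (μ₁.withDensity D₂) :=
    ⟨lt_of_le_of_lt hm2 ENNReal.ofReal_lt_top⟩
  haveI hfp : IsFiniteMeasure (p.withDensity G₂) :=
    ⟨lt_of_le_of_lt hmp (ENNReal.mul_lt_top ENNReal.ofReal_lt_top (measure_lt_top _ _))⟩
  haveI hfn : IsFiniteMeasure (n.withDensity G₂) :=
    ⟨lt_of_le_of_lt hmn (ENNReal.mul_lt_top ENNReal.ofReal_lt_top (measure_lt_top _ _))⟩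
  set σ₁ := μ₁.withDensity D₁ + p.withDensity G₂ with hσ₁def
  set σ₂ := μ₁.withDensity D₂ + n.withDensity G₂ with hσ₂def
  haveI : IsFiniteMeasure σ₁ := by rw [hσ₁def]; infer_instance
  haveI : IsFiniteMeasure σ₂ := by rw [hσ₂def]; infer_instance
  have key1 : μ₁.withDensity G₁ + μ₁.withDensity D₂
      = μ₁.withDensity G₂ + μ₁.withDensity D₁ := by
    rw [← withDensity_add_right _ hD₂m, ← withDensity_add_right _ hD₁m]
    congr 1
    funext x
    simp only [Pi.add_apply, hD₁def, hD₂def]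
    rcases le_total (G₁ x) (G₂ x) with h | h
    · rw [add_tsub_cancel_of_le h, tsub_eq_zero_of_le h, add_zero]
    · rw [tsub_eq_zero_of_le h, add_zero, add_tsub_cancel_of_le h]
  have key2 : μ₁.withDensity G₂ + n.withDensity G₂
      = μ₂.withDensity G₂ + p.withDensity G₂ := by
    rw [← withDensity_add_measure, ← withDensity_add_measure, hpn]
  have hbalance : ν₁ + σ₂ = ν₂ + σ₁ := by
    rw [hν₁def, hν₂def, hσ₁def, hσ₂def]
    calc μ₁.withDensity G₁ + (μ₁.withDensity D₂ + n.withDensity G₂)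
        = (μ₁.withDensity G₁ + μ₁.withDensity D₂) + n.withDensity G₂ := by rw [add_assoc]
      _ = (μ₁.withDensity G₂ + μ₁.withDensity D₁) + n.withDensity G₂ := by rw [key1]
      _ = μ₁.withDensity D₁ + (μ₁.withDensity G₂ + n.withDensity G₂) := by
            rw [add_comm (μ₁.withDensity G₂) (μ₁.withDensity D₁), add_assoc]
      _ = μ₁.withDensity D₁ + (μ₂.withDensity G₂ + p.withDensity G₂) := by rw [key2]
      _ = μ₂.withDensity G₂ + (μ₁.withDensity D₁ + p.withDensity G₂) := by
            rw [← add_assoc, add_comm (μ₁.withDensity D₁) (μ₂.withDensity G₂), add_assoc]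
  have htv := tv_le_of_add_eq ν₁ ν₂ σ₁ σ₂ hbalance
  have hp' : ENNReal.ofReal (Real.exp (2*Λ*B)) * p Set.univ
      = ENNReal.ofReal (Real.exp (2*Λ*B) * (p Set.univ).toReal) := by
    rw [ENNReal.ofReal_mul e2nn, ENNReal.ofReal_toReal (measure_ne_top _ _)]
  have hn' : ENNReal.ofReal (Real.exp (2*Λ*B)) * n Set.univ
      = ENNReal.ofReal (Real.exp (2*Λ*B) * (n Set.univ).toReal) := by
    rw [ENNReal.ofReal_mul e2nn, ENNReal.ofReal_toReal (measure_ne_top _ _)]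
  have hX0 : 0 ≤ Real.exp (2*Λ*B) * (p Set.univ).toReal :=
    mul_nonneg e2nn ENNReal.toReal_nonneg
  have hY0 : 0 ≤ Real.exp (2*Λ*B) * (n Set.univ).toReal :=
    mul_nonneg e2nn ENNReal.toReal_nonneg
  have hσbound : σ₁ Set.univ + σ₂ Set.univ
      ≤ ENNReal.ofReal (δ + δ + Real.exp (2*Λ*B) * TVμ) := by
    calc σ₁ Set.univ + σ₂ Set.univ
        ≤ (ENNReal.ofReal δ + ENNReal.ofReal (Real.exp (2*Λ*B) * (p Set.univ).toReal))
          + (ENNReal.ofReal δ + ENNReal.ofReal (Real.exp (2*Λ*B) * (n Set.univ).toReal)) := by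
          rw [hσ₁def, hσ₂def, Measure.add_apply, Measure.add_apply]
          exact add_le_add (add_le_add hm1 (hp' ▸ hmp)) (add_le_add hm2 (hn' ▸ hmn))
      _ = ENNReal.ofReal (δ + δ + Real.exp (2*Λ*B) * TVμ) := by
          rw [← ENNReal.ofReal_add hδ0 hX0, ← ENNReal.ofReal_add hδ0 hY0,
            ← ENNReal.ofReal_add (add_nonneg hδ0 hX0) (add_nonneg hδ0 hY0)]
          congr 1
          rw [hTVμ]; ring
  have hfinal : ((ν₁.toSignedMeasure - ν₂.toSignedMeasure).totalVariation Set.univ).toReal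
      ≤ δ + δ + Real.exp (2*Λ*B) * TVμ :=
    ENNReal.toReal_le_of_le_ofReal
      (add_nonneg (add_nonneg hδ0 hδ0) (mul_nonneg e2nn hTVμ0))
      (le_trans htv hσbound)
  -- final arithmetic
  have hd0 : (0:ℝ) ≤ ‖l₁ - l₂‖ := norm_nonneg _
  set d := ‖l₁ - l₂‖ with hddef
  have e1e1 : Real.exp (Λ*B) * Real.exp (Λ*B) = Real.exp (2*Λ*B) := by
    rw [← Real.exp_add]; ring_nf
  have e2e2 : Real.exp (2*Λ*B) * Real.exp (2*Λ*B) = Real.exp (4*Λ*B) := by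
    rw [← Real.exp_add]; ring_nf
  have hΛB0 : 0 ≤ Λ * B := mul_nonneg hΛ0 hB
  have he2le : Real.exp (2*Λ*B) ≤ Real.exp (4*Λ*B) := Real.exp_le_exp.2 (by nlinarith)
  have he4ge1 : (1:ℝ) ≤ Real.exp (4*Λ*B) := Real.one_le_exp (by nlinarith)
  have e1p := Real.exp_pos (Λ*B)
  have e2p := Real.exp_pos (2*Λ*B)
  have e4p := Real.exp_pos (4*Λ*B)
  have hAd : |A₁ - A₂| ≤ Real.exp (Λ*B) * (Real.exp (Λ*B) * B * d + Real.exp (Λ*B) * TVμ) :=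
    le_trans hAdiff (mul_le_mul_of_nonneg_left hZdiff (Real.exp_pos _).le)
  have hA2' : |A₁ - A₂| ≤ Real.exp (2*Λ*B) * B * d + Real.exp (2*Λ*B) * TVμ := by
    have hid : Real.exp (Λ*B) * (Real.exp (Λ*B) * B * d + Real.exp (Λ*B) * TVμ)
        = Real.exp (2*Λ*B) * B * d + Real.exp (2*Λ*B) * TVμ := by
      rw [← e1e1]; ring
    linarith [hAd, hid.le, hid.ge]
  have hδle : δ ≤ Real.exp (2*Λ*B) * B * d + Real.exp (4*Λ*B) * B * d
      + Real.exp (4*Λ*B) * TVμ := by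
    rw [hδdef]
    have h1 : Real.exp (2*Λ*B) * |A₁ - A₂|
        ≤ Real.exp (2*Λ*B) * (Real.exp (2*Λ*B) * B * d + Real.exp (2*Λ*B) * TVμ) :=
      mul_le_mul_of_nonneg_left hA2' e2p.le
    have hid : Real.exp (2*Λ*B) * (Real.exp (2*Λ*B) * B * d + Real.exp (2*Λ*B) * TVμ)
        = Real.exp (4*Λ*B) * B * d + Real.exp (4*Λ*B) * TVμ := by
      rw [← e2e2]; ring
    rw [hid] at h1
    have hexp : Real.exp (2*Λ*B) * (B * d + |A₁ - A₂|)
        = Real.exp (2*Λ*B) * B * d + Real.exp (2*Λ*B) * |A₁ - A₂| := by ring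
    linarith
  calc ((ν₁.toSignedMeasure - ν₂.toSignedMeasure).totalVariation Set.univ).toReal
      ≤ δ + δ + Real.exp (2*Λ*B) * TVμ := hfinal
    _ ≤ 4 * Real.exp (4*Λ*B) * (B + 1) * (d + TVμ) := by
        nlinarith [hδle, hd0, hTVμ0, he2le, he4ge1, hB,
          mul_nonneg (mul_nonneg (sub_nonneg.2 he2le) hB) hd0,
          mul_nonneg (sub_nonneg.2 he2le) hTVμ0,
          mul_nonneg e4p.le hd0,
          mul_nonneg (mul_nonneg e4p.le hB) hTVμ0,
          mul_nonneg e4p.le hTVμ0,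
          mul_nonneg (mul_nonneg e4p.le hB) hd0]
    _ = 4 * Real.exp (4*Λ*B) * (B + 1) * (‖l₁ - l₂‖ + TVμ) := by rw [hddef]
end

section
/- Let E be a real normed space, C ⊆ E a convex subset, h_0 > 0 and C_Lip ≥ 0. Let F : [0, h_0] × C → E satisfy F(0, μ) = μ for every μ ∈ C. Suppose there are maps D_1, D_2 : [0, h_0] × C × E → E such that for all μ, ν ∈ C, writing η = ν − μ and μ_β = μ + βη for β ∈ [0,1]: (a) for every h ∈ [0, h_0] and β ∈ [0,1), (F(h, μ_β + εη) − F(h, μ_β))/ε → D_1(h, μ_β, η) as ε → 0⁺; (b) for every β, the map h ↦ D_1(h, μ_β, η) is differentiable on [0, h_0] with derivative D_2(h, μ_β, η); (c) ‖D_2(h, μ_β, η)‖ ≤ C_Lip ‖η‖ for all h ∈ [0, h_0] and β ∈ [0,1]; (d) for every h, the map β ↦ F(h, μ_β) is continuous on [0,1]. Then for all h ∈ [0, h_0] and all μ, ν ∈ C, ‖F(h, ν) − F(h, μ)‖ ≤ (1 + C_Lip · h) ‖ν − μ‖. -/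
open Filter

/-- Abstract numerical-stability (Lipschitz) lemma. Let E be a real
normed space, C ⊆ E convex, h₀ > 0, C_Lip ≥ 0, and F : [0, h₀] × C → E with
F(0, μ) = μ. Suppose D₁ is the one-sided directional derivative of F(h, ·) along
segments of C (hypothesis (a)), h ↦ D₁(h, μ_β, η) is differentiable on [0, h₀] with
derivative D₂ (b), ‖D₂(h, μ_β, η)‖ ≤ C_Lip ‖η‖ (c), and β ↦ F(h, μ_β) is continuous
on [0,1] (d). Then ‖F(h, ν) − F(h, μ)‖ ≤ (1 + C_Lip·h) ‖ν − μ‖ for all h ∈ [0, h₀]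
and μ, ν ∈ C. -/
theorem abstract_lipschitz_stability
    {E : Type*} [NormedAddCommGroup E] [NormedSpace ℝ E]
    (C : Set E) (hC : Convex ℝ C)
    (h₀ : ℝ) (hh₀ : 0 < h₀)
    (CLip : ℝ) (hCLip : 0 ≤ CLip)
    (F : ℝ → E → E)
    (D₁ D₂ : ℝ → E → E → E)
    (hF0 : ∀ μ ∈ C, F 0 μ = μ)
    (ha : ∀ μ ∈ C, ∀ ν ∈ C, ∀ h ∈ Set.Icc (0 : ℝ) h₀, ∀ β ∈ Set.Ico (0 : ℝ) 1,
      Tendsto (fun ε : ℝ =>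
          ε⁻¹ • (F h (μ + β • (ν - μ) + ε • (ν - μ)) - F h (μ + β • (ν - μ))))
        (nhdsWithin 0 (Set.Ioi 0))
        (nhds (D₁ h (μ + β • (ν - μ)) (ν - μ))))
    (hb : ∀ μ ∈ C, ∀ ν ∈ C, ∀ β ∈ Set.Icc (0 : ℝ) 1, ∀ h ∈ Set.Icc (0 : ℝ) h₀,
      HasDerivWithinAt (fun h' => D₁ h' (μ + β • (ν - μ)) (ν - μ))
        (D₂ h (μ + β • (ν - μ)) (ν - μ)) (Set.Icc (0 : ℝ) h₀) h)
    (hc : ∀ μ ∈ C, ∀ ν ∈ C, ∀ h ∈ Set.Icc (0 : ℝ) h₀, ∀ β ∈ Set.Icc (0 : ℝ) 1,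
      ‖D₂ h (μ + β • (ν - μ)) (ν - μ)‖ ≤ CLip * ‖ν - μ‖)
    (hd : ∀ μ ∈ C, ∀ ν ∈ C, ∀ h ∈ Set.Icc (0 : ℝ) h₀,
      ContinuousOn (fun β : ℝ => F h (μ + β • (ν - μ))) (Set.Icc (0 : ℝ) 1)) :
    ∀ h ∈ Set.Icc (0 : ℝ) h₀, ∀ μ ∈ C, ∀ ν ∈ C,
      ‖F h ν - F h μ‖ ≤ (1 + CLip * h) * ‖ν - μ‖ := by
  intro h hh μ hμ ν hν
  set η := ν - μ with hηdef
  have h0mem : (0 : ℝ) ∈ Set.Icc (0 : ℝ) h₀ := ⟨le_refl _, le_of_lt hh₀⟩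
  -- Step 1: D₁ 0 μ_β η = η for β ∈ [0,1)
  have step1 : ∀ β ∈ Set.Ico (0 : ℝ) 1, D₁ 0 (μ + β • η) η = η := by
    intro β hβ
    have hlim := ha μ hμ ν hν 0 h0mem β hβ
    have heq : (fun ε : ℝ => ε⁻¹ • (F 0 (μ + β • η + ε • η) - F 0 (μ + β • η)))
        =ᶠ[nhdsWithin (0 : ℝ) (Set.Ioi 0)] fun _ => η := by
      have hmem : Set.Ioo (0 : ℝ) (1 - β) ∈ nhdsWithin (0 : ℝ) (Set.Ioi 0) :=
        Ioo_mem_nhdsGT_of_mem ⟨le_refl _, by linarith [hβ.2]⟩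
      filter_upwards [hmem] with ε hε
      have hε0 : ε ≠ 0 := ne_of_gt hε.1
      have h1 : μ + β • η + ε • η = μ + (β + ε) • η := by rw [add_smul]; abel
      have hmemC : μ + (β + ε) • η ∈ C :=
        hC.add_smul_sub_mem hμ hν ⟨by linarith [hβ.1, hε.1], by linarith [hε.2]⟩
      have hmemC' : μ + β • η ∈ C :=
        hC.add_smul_sub_mem hμ hν ⟨hβ.1, le_of_lt hβ.2⟩
      rw [h1, hF0 _ hmemC, hF0 _ hmemC']
      have h2 : μ + (β + ε) • η - (μ + β • η) = ε • η := by rw [add_smul]; abel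
      rw [h2, inv_smul_smul₀ hε0]
    exact tendsto_nhds_unique (hlim.congr' heq) tendsto_const_nhds
  -- Step 2: bound on D₁ h μ_β η for β ∈ [0,1)
  have step2 : ∀ β ∈ Set.Ico (0 : ℝ) 1,
      ‖D₁ h (μ + β • η) η‖ ≤ (1 + CLip * h) * ‖η‖ := by
    intro β hβ
    have hβ' : β ∈ Set.Icc (0 : ℝ) 1 := Set.Ico_subset_Icc_self hβ
    have hmvt := norm_image_sub_le_of_norm_deriv_le_segment'
      (fun x hx => hb μ hμ ν hν β hβ' x hx)
      (fun x hx => hc μ hμ ν hν x (Set.Ico_subset_Icc_self hx) β hβ') h hh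
    have hD10 := step1 β hβ
    calc ‖D₁ h (μ + β • η) η‖
        = ‖(D₁ h (μ + β • η) η - D₁ 0 (μ + β • η) η) + D₁ 0 (μ + β • η) η‖ := by
          rw [sub_add_cancel]
      _ ≤ ‖D₁ h (μ + β • η) η - D₁ 0 (μ + β • η) η‖ + ‖D₁ 0 (μ + β • η) η‖ :=
          norm_add_le _ _
      _ ≤ CLip * ‖η‖ * (h - 0) + ‖D₁ 0 (μ + β • η) η‖ := add_le_add_left hmvt _
      _ = (1 + CLip * h) * ‖η‖ := by rw [hD10]; ring
  -- Step 3: right derivative of g(β) = F h (μ + β • η)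
  have step3 : ∀ β ∈ Set.Ico (0 : ℝ) 1,
      HasDerivWithinAt (fun β : ℝ => F h (μ + β • η)) (D₁ h (μ + β • η) η)
        (Set.Ici β) β := by
    intro β hβ
    rw [hasDerivWithinAt_iff_tendsto_slope]
    have hset : Set.Ici β \ {β} = Set.Ioi β := Set.Ici_sdiff_left
    rw [hset]
    have hmap : Tendsto (fun y : ℝ => y - β) (nhdsWithin β (Set.Ioi β))
        (nhdsWithin 0 (Set.Ioi 0)) := by
      apply tendsto_nhdsWithin_of_tendsto_nhds_of_eventually_within
      · simpa using ((tendsto_id (x := nhds β)).sub_const β).mono_left nhdsWithin_le_nhds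
      · filter_upwards [self_mem_nhdsWithin] with y hy
        simpa [sub_pos] using hy
    have hcomp := (ha μ hμ ν hν h hh β hβ).comp hmap
    refine hcomp.congr fun y => ?_
    have h1 : μ + β • η + (y - β) • η = μ + y • η := by rw [sub_smul]; abel
    simp only [Function.comp, ← hηdef, h1, slope_def_module]
  -- Step 4: conclude via MVT with right derivatives
  have key := norm_image_sub_le_of_norm_deriv_right_le_segment
    (f' := fun β => D₁ h (μ + β • η) η) (hd μ hμ ν hν h hh) step3 step2 1
    (Set.right_mem_Icc.2 zero_le_one)
  have h1 : μ + (1 : ℝ) • η = ν := by rw [one_smul, hηdef]; abel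
  have h0 : μ + (0 : ℝ) • η = μ := by rw [zero_smul, add_zero]
  rw [h1, h0] at key
  simpa using key
end

section
/- Let d ∈ ℕ, T > 0 and c, C > 1. Let p_0 : ℝ^d → ℝ satisfy C^{-1} exp(−c|x|²) ≤ p_0(x) ≤ C exp(−|x|²/c) for all x ∈ ℝ^d, and let p : (0, T] × ℝ^d × ℝ^d → ℝ be a nonnegative measurable kernel satisfying the Gaussian (Aronson) bounds C^{-1} t^{-d/2} exp(−c|x−ξ|²/t) ≤ p(t, x; ξ) ≤ C t^{-d/2} exp(−|x−ξ|²/(c t)) for all t ∈ (0, T] and x, ξ ∈ ℝ^d. Then there exists a constant C' > 1, depending only on c, C and d, such that for all t ∈ (0, T] and x ∈ ℝ^d, (C')^{-1} (1 + 2t)^{-d/2} exp(−2c|x|²) ≤ ∫_{ℝ^d} p(t, x; ξ) p_0(ξ) dξ ≤ C' exp(−|x|²/(c(1 + 2t))). -/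
open MeasureTheory Real

section Aux

variable {d : ℕ}

local notation "E" => EuclideanSpace ℝ (Fin d)

private lemma my_complete_square (a b : ℝ) (hab : a + b ≠ 0) (x ξ : E) :
    a * ‖x - ξ‖ ^ 2 + b * ‖ξ‖ ^ 2
      = (a + b) * ‖ξ - (a / (a + b)) • x‖ ^ 2 + (a * b / (a + b)) * ‖x‖ ^ 2 := by
  have h1 : ‖x - ξ‖ ^ 2 = ‖x‖ ^ 2 - 2 * inner ℝ x ξ + ‖ξ‖ ^ 2 := norm_sub_sq_real x ξ
  have h2 : ‖ξ - (a / (a + b)) • x‖ ^ 2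
      = ‖ξ‖ ^ 2 - 2 * ((a / (a + b)) * inner ℝ x ξ) + (a / (a + b)) ^ 2 * ‖x‖ ^ 2 := by
    rw [norm_sub_sq_real, real_inner_smul_right, norm_smul, mul_pow, real_inner_comm]
    rw [Real.norm_eq_abs, sq_abs]
  rw [h1, h2]
  field_simp
  ring

private lemma my_gauss_integrable (a b : ℝ) (ha : 0 < a) (hb : 0 < b) (x : E) :
    Integrable (fun ξ : E => Real.exp (-(a * ‖x - ξ‖ ^ 2 + b * ‖ξ‖ ^ 2))) := by
  have hab : 0 < a + b := by linarith
  have base : Integrable (fun v : E => Real.exp (-(a + b) * ‖v‖ ^ 2)) := by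
    have h := (GaussianFourier.integrable_cexp_neg_mul_sq_norm_add
      (b := ((a + b : ℝ) : ℂ)) (by simpa using hab) 0 (0 : E)).norm
    refine h.congr (Filter.Eventually.of_forall fun v => ?_)
    have : ((‖v‖ : ℂ) ^ 2).re = (‖v‖ : ℝ) ^ 2 := by
      norm_cast
    simp only [Complex.norm_exp]
    norm_num [this]
  have : Integrable (fun ξ : E => Real.exp (-(a + b) * ‖ξ - (a / (a + b)) • x‖ ^ 2)) :=
    base.comp_sub_right ((a / (a + b)) • x)
  have h2 := this.mul_const (Real.exp (-(a * b / (a + b)) * ‖x‖ ^ 2))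
  refine h2.congr (Filter.Eventually.of_forall fun ξ => ?_)
  simp only
  rw [← Real.exp_add]
  congr 1
  rw [my_complete_square a b hab.ne' x ξ]
  ring

private lemma my_gauss_integral (a b : ℝ) (ha : 0 < a) (hb : 0 < b) (x : E) :
    (∫ ξ : E, Real.exp (-(a * ‖x - ξ‖ ^ 2 + b * ‖ξ‖ ^ 2)))
      = (Real.pi / (a + b)) ^ ((d : ℝ) / 2) * Real.exp (-(a * b / (a + b)) * ‖x‖ ^ 2) := by
  have hab : 0 < a + b := by linarith
  have key : ∀ ξ : E, Real.exp (-(a * ‖x - ξ‖ ^ 2 + b * ‖ξ‖ ^ 2))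
      = Real.exp (-(a + b) * ‖ξ - (a / (a + b)) • x‖ ^ 2)
        * Real.exp (-(a * b / (a + b)) * ‖x‖ ^ 2) := fun ξ => by
    rw [← Real.exp_add]
    congr 1
    rw [my_complete_square a b hab.ne' x ξ]
    ring
  simp_rw [key]
  rw [integral_mul_const, integral_sub_right_eq_self
    (fun v : E => Real.exp (-(a + b) * ‖v‖ ^ 2)) ((a / (a + b)) • x),
    GaussianFourier.integral_rexp_neg_mul_sq_norm hab, finrank_euclideanSpace_fin]

/-- Gaussian convolution with both scales proportional to `γ`. -/
private lemma my_key (γ t : ℝ) (hγ : 0 < γ) (ht : 0 < t) (x : E) :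
    (∫ ξ : E, Real.exp (-((γ / t) * ‖x - ξ‖ ^ 2 + γ * ‖ξ‖ ^ 2)))
      = ((Real.pi / (γ * (1 + t))) * t) ^ ((d : ℝ) / 2)
        * Real.exp (-(γ / (1 + t)) * ‖x‖ ^ 2) := by
  rw [my_gauss_integral (γ / t) γ (by positivity) hγ x]
  have h1t : (0:ℝ) < 1 + t := by linarith
  congr 2
  · field_simp
  · field_simp

end Aux

private lemma my_rpow_cancel (t X e : ℝ) (ht : 0 < t) (hX : 0 ≤ X) (he : 0 ≤ e) :
    t ^ (-e) * (X * t) ^ e = X ^ e := by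
  rw [Real.mul_rpow hX ht.le, Real.rpow_neg ht.le]
  have := (Real.rpow_pos_of_pos ht e).ne'
  field_simp

/-- If the initial density p₀ and the transition kernel p satisfy
two-sided Gaussian (Aronson) bounds with constants c, C > 1 on (0, T], then the
time-t density x ↦ ∫ p(t, x; ξ) p₀(ξ) dξ satisfies the two-sided Gaussian bounds
(C')⁻¹ (1+2t)^{-d/2} exp(−2c|x|²) ≤ p(t, x) ≤ C' exp(−|x|²/(c(1+2t))) for a constant
C' > 1 depending only on c, C and d. -/
theorem density_gaussian_bounds
    (d : ℕ) (T : ℝ) (hT : 0 < T) (c C : ℝ) (hc : 1 < c) (hC : 1 < C)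
    (p₀ : EuclideanSpace ℝ (Fin d) → ℝ) (hp₀_meas : Measurable p₀)
    (hp₀ : ∀ x, C⁻¹ * Real.exp (-c * ‖x‖ ^ 2) ≤ p₀ x ∧
                p₀ x ≤ C * Real.exp (-‖x‖ ^ 2 / c))
    (p : ℝ → EuclideanSpace ℝ (Fin d) → EuclideanSpace ℝ (Fin d) → ℝ)
    (hp_meas : ∀ t x, Measurable (p t x))
    (hp_nonneg : ∀ t x ξ, 0 ≤ p t x ξ)
    (hp : ∀ t ∈ Set.Ioc (0 : ℝ) T, ∀ x ξ,
      C⁻¹ * t ^ (-(d : ℝ) / 2) * Real.exp (-c * ‖x - ξ‖ ^ 2 / t) ≤ p t x ξ ∧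
      p t x ξ ≤ C * t ^ (-(d : ℝ) / 2) * Real.exp (-‖x - ξ‖ ^ 2 / (c * t))) :
    ∃ C' : ℝ, 1 < C' ∧ ∀ t ∈ Set.Ioc (0 : ℝ) T, ∀ x,
      C'⁻¹ * (1 + 2 * t) ^ (-(d : ℝ) / 2) * Real.exp (-2 * c * ‖x‖ ^ 2)
          ≤ (∫ ξ, p t x ξ * p₀ ξ) ∧
      (∫ ξ, p t x ξ * p₀ ξ) ≤ C' * Real.exp (-‖x‖ ^ 2 / (c * (1 + 2 * t))) := by
  have hπ : (1:ℝ) < Real.pi := by linarith [Real.pi_gt_three]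
  have hc0 : (0:ℝ) < c := by linarith
  have hC0 : (0:ℝ) < C := by linarith
  have he : (0:ℝ) ≤ (d : ℝ) / 2 := by positivity
  set e : ℝ := (d : ℝ) / 2 with he_def
  have hX1 : (1:ℝ) ≤ (Real.pi * c) ^ e := Real.one_le_rpow (by nlinarith) he
  have hX2 : (0:ℝ) < (c / Real.pi) ^ e := Real.rpow_pos_of_pos (by positivity) e
  refine ⟨C ^ 2 * ((Real.pi * c) ^ e + (c / Real.pi) ^ e), by nlinarith, ?_⟩
  rintro t ⟨ht, htT⟩ x
  have h1t : (0:ℝ) < 1 + t := by linarith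
  have h12t : (0:ℝ) < 1 + 2 * t := by linarith
  have hp₀_pos : ∀ ξ, 0 < p₀ ξ := fun ξ =>
    lt_of_lt_of_le (by positivity) (hp₀ ξ).1
  have hneg : -(d : ℝ) / 2 = -e := by rw [he_def]; ring
  -- upper pointwise bound
  have hup : ∀ ξ, p t x ξ * p₀ ξ
      ≤ (C ^ 2 * t ^ (-e)) * Real.exp (-(((1/c) / t) * ‖x - ξ‖ ^ 2 + (1/c) * ‖ξ‖ ^ 2)) := by
    intro ξ
    have h1 := (hp t ⟨ht, htT⟩ x ξ).2
    have h2 := (hp₀ ξ).2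
    rw [hneg] at h1
    calc p t x ξ * p₀ ξ
        ≤ (C * t ^ (-e) * Real.exp (-‖x - ξ‖ ^ 2 / (c * t)))
            * (C * Real.exp (-‖ξ‖ ^ 2 / c)) :=
          mul_le_mul h1 h2 (hp₀_pos ξ).le (by positivity)
      _ = (C ^ 2 * t ^ (-e))
            * (Real.exp (-‖x - ξ‖ ^ 2 / (c * t)) * Real.exp (-‖ξ‖ ^ 2 / c)) := by ring
      _ = _ := by
          rw [← Real.exp_add]
          congr 2
          field_simp
          ring
  have hIntU : Integrable (fun ξ : EuclideanSpace ℝ (Fin d) =>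
      (C ^ 2 * t ^ (-e)) * Real.exp (-(((1/c) / t) * ‖x - ξ‖ ^ 2 + (1/c) * ‖ξ‖ ^ 2))) :=
    (my_gauss_integrable ((1/c) / t) (1/c) (by positivity) (by positivity) x).const_mul _
  -- value of the upper gaussian integral
  have hvalU : (∫ ξ : EuclideanSpace ℝ (Fin d),
        (C ^ 2 * t ^ (-e)) * Real.exp (-(((1/c) / t) * ‖x - ξ‖ ^ 2 + (1/c) * ‖ξ‖ ^ 2)))
      = C ^ 2 * ((Real.pi / ((1/c) * (1 + t))) ^ e
          * Real.exp (-((1/c) / (1 + t)) * ‖x‖ ^ 2)) := by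
    rw [integral_const_mul, my_key (1/c) t (by positivity) ht x,
      he_def]
    rw [show (C ^ 2 * t ^ (-((d:ℝ)/2))) * ((Real.pi / ((1/c) * (1 + t)) * t) ^ ((d:ℝ)/2)
          * Real.exp (-((1/c) / (1 + t)) * ‖x‖ ^ 2))
        = C ^ 2 * ((t ^ (-((d:ℝ)/2)) * ((Real.pi / ((1/c) * (1 + t))) * t) ^ ((d:ℝ)/2))
          * Real.exp (-((1/c) / (1 + t)) * ‖x‖ ^ 2)) from by ring]
    rw [my_rpow_cancel t _ _ ht (by positivity) (by positivity)]
  -- lower pointwise bound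
  have hlo : ∀ ξ, (C⁻¹ ^ 2 * t ^ (-e))
        * Real.exp (-((c / t) * ‖x - ξ‖ ^ 2 + c * ‖ξ‖ ^ 2)) ≤ p t x ξ * p₀ ξ := by
    intro ξ
    have h1 := (hp t ⟨ht, htT⟩ x ξ).1
    have h2 := (hp₀ ξ).1
    rw [hneg] at h1
    calc (C⁻¹ ^ 2 * t ^ (-e)) * Real.exp (-((c / t) * ‖x - ξ‖ ^ 2 + c * ‖ξ‖ ^ 2))
        = (C⁻¹ * t ^ (-e) * Real.exp (-c * ‖x - ξ‖ ^ 2 / t))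
            * (C⁻¹ * Real.exp (-c * ‖ξ‖ ^ 2)) := by
          have hE : Real.exp (-c * ‖x - ξ‖ ^ 2 / t) * Real.exp (-c * ‖ξ‖ ^ 2)
              = Real.exp (-((c / t) * ‖x - ξ‖ ^ 2 + c * ‖ξ‖ ^ 2)) := by
            rw [← Real.exp_add]; congr 1; ring
          rw [← hE]; ring
      _ ≤ p t x ξ * p₀ ξ :=
          mul_le_mul h1 h2 (by positivity) (hp_nonneg t x ξ)
  have hIntP : Integrable (fun ξ => p t x ξ * p₀ ξ) := by
    refine hIntU.mono' (((hp_meas t x).mul hp₀_meas).aestronglyMeasurable)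
      (Filter.Eventually.of_forall fun ξ => ?_)
    rw [Real.norm_eq_abs, abs_of_nonneg (mul_nonneg (hp_nonneg t x ξ) (hp₀_pos ξ).le)]
    exact hup ξ
  have hvalL : (∫ ξ : EuclideanSpace ℝ (Fin d),
        (C⁻¹ ^ 2 * t ^ (-e)) * Real.exp (-((c / t) * ‖x - ξ‖ ^ 2 + c * ‖ξ‖ ^ 2)))
      = C⁻¹ ^ 2 * ((Real.pi / (c * (1 + t))) ^ e
          * Real.exp (-(c / (1 + t)) * ‖x‖ ^ 2)) := by
    rw [integral_const_mul, my_key c t hc0 ht x, he_def]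
    rw [show (C⁻¹ ^ 2 * t ^ (-((d:ℝ)/2))) * ((Real.pi / (c * (1 + t)) * t) ^ ((d:ℝ)/2)
          * Real.exp (-(c / (1 + t)) * ‖x‖ ^ 2))
        = C⁻¹ ^ 2 * ((t ^ (-((d:ℝ)/2)) * ((Real.pi / (c * (1 + t))) * t) ^ ((d:ℝ)/2))
          * Real.exp (-(c / (1 + t)) * ‖x‖ ^ 2)) from by ring]
    rw [my_rpow_cancel t _ _ ht (by positivity) (by positivity)]
  constructor
  · -- lower bound
    have step : (∫ ξ : EuclideanSpace ℝ (Fin d),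
          (C⁻¹ ^ 2 * t ^ (-e)) * Real.exp (-((c / t) * ‖x - ξ‖ ^ 2 + c * ‖ξ‖ ^ 2)))
        ≤ ∫ ξ, p t x ξ * p₀ ξ :=
      integral_mono_of_nonneg (Filter.Eventually.of_forall fun ξ => by positivity)
        hIntP (Filter.Eventually.of_forall hlo)
    rw [hvalL] at step
    refine le_trans ?_ step
    rw [hneg]
    -- (C')⁻¹ * (1+2t)^(-e) * exp(-2c‖x‖²) ≤ C⁻² * ((π/(c(1+t)))^e * exp(-(c/(1+t))‖x‖²))
    have hinv : (C ^ 2 * ((Real.pi * c) ^ e + (c / Real.pi) ^ e))⁻¹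
        ≤ C⁻¹ ^ 2 * (Real.pi / c) ^ e := by
      rw [show C⁻¹ ^ 2 * (Real.pi / c) ^ e = (C ^ 2 * (c / Real.pi) ^ e)⁻¹ from ?_]
      · apply inv_anti₀ (by positivity)
        nlinarith [Real.rpow_pos_of_pos (mul_pos Real.pi_pos hc0) e, sq_nonneg C]
      · rw [mul_inv, ← Real.inv_rpow (by positivity), inv_div, inv_pow]
    have hrp : (Real.pi / c) ^ e * (1 + 2 * t) ^ (-e) ≤ (Real.pi / (c * (1 + t))) ^ e := by
      rw [Real.rpow_neg h12t.le, ← Real.inv_rpow h12t.le,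
        ← Real.mul_rpow (by positivity) (by positivity)]
      apply Real.rpow_le_rpow (by positivity) ?_ he
      rw [show Real.pi / c * (1 + 2 * t)⁻¹ = Real.pi / (c * (1 + 2 * t)) from by
        field_simp]
      gcongr
      linarith
    have hexp : Real.exp (-2 * c * ‖x‖ ^ 2) ≤ Real.exp (-(c / (1 + t)) * ‖x‖ ^ 2) := by
      apply Real.exp_le_exp.2
      have h1 : c / (1 + t) ≤ 2 * c := by
        rw [div_le_iff₀ h1t]; nlinarith
      nlinarith [sq_nonneg ‖x‖]
    calc (C ^ 2 * ((Real.pi * c) ^ e + (c / Real.pi) ^ e))⁻¹ * (1 + 2 * t) ^ (-e)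
          * Real.exp (-2 * c * ‖x‖ ^ 2)
        ≤ (C⁻¹ ^ 2 * (Real.pi / c) ^ e) * (1 + 2 * t) ^ (-e)
          * Real.exp (-(c / (1 + t)) * ‖x‖ ^ 2) := by
          apply mul_le_mul (mul_le_mul_of_nonneg_right hinv (by positivity)) hexp
            (by positivity) (by positivity)
      _ = C⁻¹ ^ 2 * (((Real.pi / c) ^ e * (1 + 2 * t) ^ (-e))
            * Real.exp (-(c / (1 + t)) * ‖x‖ ^ 2)) := by ring
      _ ≤ C⁻¹ ^ 2 * ((Real.pi / (c * (1 + t))) ^ e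
            * Real.exp (-(c / (1 + t)) * ‖x‖ ^ 2)) := by
          apply mul_le_mul_of_nonneg_left ?_ (by positivity)
          exact mul_le_mul_of_nonneg_right hrp (by positivity)
  · -- upper bound
    have step : (∫ ξ, p t x ξ * p₀ ξ) ≤ ∫ ξ : EuclideanSpace ℝ (Fin d),
          (C ^ 2 * t ^ (-e)) * Real.exp (-(((1/c) / t) * ‖x - ξ‖ ^ 2 + (1/c) * ‖ξ‖ ^ 2)) :=
      integral_mono_of_nonneg
        (Filter.Eventually.of_forall fun ξ =>
          mul_nonneg (hp_nonneg t x ξ) (hp₀_pos ξ).le)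
        hIntU (Filter.Eventually.of_forall hup)
    rw [hvalU] at step
    refine le_trans step ?_
    have hrp : (Real.pi / ((1/c) * (1 + t))) ^ e ≤ (Real.pi * c) ^ e := by
      apply Real.rpow_le_rpow (by positivity) ?_ he
      rw [show Real.pi / ((1/c) * (1 + t)) = Real.pi * c / (1 + t) from by
        field_simp]
      exact div_le_self (by positivity) (by linarith)
    have hexp : Real.exp (-((1/c) / (1 + t)) * ‖x‖ ^ 2)
        ≤ Real.exp (-‖x‖ ^ 2 / (c * (1 + 2 * t))) := by
      apply Real.exp_le_exp.2
      rw [div_div]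
      rw [show -‖x‖ ^ 2 / (c * (1 + 2 * t)) = -(1 / (c * (1 + 2 * t))) * ‖x‖ ^ 2 from by ring]
      apply mul_le_mul_of_nonneg_right ?_ (sq_nonneg ‖x‖)
      rw [neg_le_neg_iff]
      apply one_div_le_one_div_of_le (by positivity)
      nlinarith
    calc C ^ 2 * ((Real.pi / ((1/c) * (1 + t))) ^ e
            * Real.exp (-((1/c) / (1 + t)) * ‖x‖ ^ 2))
        ≤ C ^ 2 * ((Real.pi * c) ^ e * Real.exp (-‖x‖ ^ 2 / (c * (1 + 2 * t)))) := by
          apply mul_le_mul_of_nonneg_left ?_ (by positivity)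
          exact mul_le_mul hrp hexp (Real.exp_pos _).le (by positivity)
      _ = (C ^ 2 * (Real.pi * c) ^ e) * Real.exp (-‖x‖ ^ 2 / (c * (1 + 2 * t))) := by
          ring
      _ ≤ C ^ 2 * ((Real.pi * c) ^ e + (c / Real.pi) ^ e)
            * Real.exp (-‖x‖ ^ 2 / (c * (1 + 2 * t))) := by
          apply mul_le_mul_of_nonneg_right ?_ (Real.exp_pos _).le
          apply mul_le_mul_of_nonneg_left (by linarith) (by positivity)
end
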